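/- arXiv:1809.05974 — 4 statements merged into one kernel-verified Lean document; each statement's English description precedes it below -/
import Mathlib

section
/- Let G be a graph with 7 ≤ |V(G)| ≤ 11 and minimum degree at least 6. If G is not 5-connected, then G contains K_5 minus one edge as a subgraph. -/
open SimpleGraph

/-- The complete 5-partite graph `K_{2,2,2,2,2}`. -/
abbrev K22222 : SimpleGraph (Σ _ : Fin 5, Fin 2) :=
  SimpleGraph.completeMultipartiteGraph fun _ => Fin 2

/-- An `(H₁, H₂, k)`-cockade: any graph isomorphic to `H₁` or `H₂` is one, and identifying
cliques of size `k` in two cockades yields one (expressed via a decomposition of the glued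
graph into the two overlapping pieces). -/
inductive IsCockade {α β : Type} (H₁ : SimpleGraph α) (H₂ : SimpleGraph β) (k : ℕ) :
    {V : Type} → SimpleGraph V → Prop
  | base₁ {V : Type} (G : SimpleGraph V) : Nonempty (G ≃g H₁) → IsCockade H₁ H₂ k G
  | base₂ {V : Type} (G : SimpleGraph V) : Nonempty (G ≃g H₂) → IsCockade H₁ H₂ k G
  | glue {V : Type} (G : SimpleGraph V) (A B : Set V) :
      A ∪ B = Set.univ → ¬ A ⊆ B → ¬ B ⊆ A →
      (A ∩ B).ncard = k → G.IsClique (A ∩ B) →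
      (∀ u ∈ A \ B, ∀ v ∈ B \ A, ¬ G.Adj u v) →
      IsCockade H₁ H₂ k (G.induce A) → IsCockade H₁ H₂ k (G.induce B) →
      IsCockade H₁ H₂ k G

/-- A `(K₈, K_{2,2,2,2,2}, 5)`-cockade. -/
abbrev Cockade85 {V : Type} (G : SimpleGraph V) : Prop :=
  IsCockade (⊤ : SimpleGraph (Fin 8)) K22222 5 G

/-- `H` is a minor of `G`, via branch sets. -/
def IsMinorOf {W V : Type} (H : SimpleGraph W) (G : SimpleGraph V) : Prop :=
  ∃ B : W → Set V,
    (∀ w, (B w).Nonempty) ∧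
    (∀ w, (G.induce (B w)).Connected) ∧
    (Pairwise fun w₁ w₂ => Disjoint (B w₁) (B w₂)) ∧
    (∀ w₁ w₂, H.Adj w₁ w₂ → ∃ u ∈ B w₁, ∃ v ∈ B w₂, G.Adj u v)

/-- `G` contains `K_t` minus two edges as a minor (either of the two nonisomorphic graphs). -/
def HasKEqMinor (t : ℕ) {V : Type} (G : SimpleGraph V) : Prop :=
  ∃ e₁ e₂ : Sym2 (Fin t), e₁ ≠ e₂ ∧ ¬ e₁.IsDiag ∧ ¬ e₂.IsDiag ∧
    IsMinorOf ((⊤ : SimpleGraph (Fin t)).deleteEdges {e₁, e₂}) G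


/-- Add to `G` a new vertex (the `none` vertex) adjacent exactly to the vertices in `N`. -/
def addVertex {V : Type} (G : SimpleGraph V) (N : Set V) : SimpleGraph (Option V) where
  Adj a b :=
    match a, b with
    | some u, some w => G.Adj u w
    | some u, none => u ∈ N
    | none, some w => w ∈ N
    | none, none => False
  symm := ⟨by rintro (_ | u) (_ | w) h <;> first | exact h | exact h.symm⟩
  loopless := ⟨by
    rintro (_ | u) h
    · exact h
    · exact G.irrefl h⟩

/-- The graph obtained from `G` by contracting the edge `xy` (the merged vertex is `x`,
and `y` is deleted). -/
def contractEdge {V : Type} (G : SimpleGraph V) (x y : V) :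
    SimpleGraph {z : V // z ≠ y} where
  Adj a b := a ≠ b ∧
    (G.Adj a b ∨ ((a : V) = x ∧ G.Adj y b) ∨ ((b : V) = x ∧ G.Adj y a))
  symm := ⟨by
    rintro a b ⟨hne, h⟩
    refine ⟨hne.symm, ?_⟩
    rcases h with h | ⟨h1, h2⟩ | ⟨h1, h2⟩
    · exact Or.inl h.symm
    · exact Or.inr (Or.inr ⟨h1, h2⟩)
    · exact Or.inr (Or.inl ⟨h1, h2⟩)⟩
  loopless := ⟨fun a h => h.1 rfl⟩

/-- The join of two graphs. -/
def joinGraph {α β : Type} (G : SimpleGraph α) (H : SimpleGraph β) : SimpleGraph (α ⊕ β) where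
  Adj a b :=
    match a, b with
    | .inl a, .inl b => G.Adj a b
    | .inr a, .inr b => H.Adj a b
    | .inl _, .inr _ => True
    | .inr _, .inl _ => True
  symm := ⟨by rintro (a | a) (b | b) h <;> first | exact h.symm | trivial⟩
  loopless := ⟨by rintro (a | a) h; exacts [G.irrefl h, H.irrefl h]⟩

/-- The disjoint union of two graphs. -/
def disjUnionGraph {α β : Type} (G : SimpleGraph α) (H : SimpleGraph β) :
    SimpleGraph (α ⊕ β) where
  Adj a b :=
    match a, b with
    | .inl a, .inl b => G.Adj a b
    | .inr a, .inr b => H.Adj a b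
    | .inl _, .inr _ => False
    | .inr _, .inl _ => False
  symm := ⟨by rintro (a | a) (b | b) h <;> first | exact h.symm | exact h⟩
  loopless := ⟨by rintro (a | a) h; exacts [G.irrefl h, H.irrefl h]⟩

/-- The cycle graph `C_n` on `ZMod n`. -/
def cycleG (n : ℕ) [NeZero n] : SimpleGraph (ZMod n) :=
  SimpleGraph.fromRel fun i j => i - j = 1

/-- The Petersen graph, as the Kneser graph on 2-element subsets of a 5-element set. -/
def petersen : SimpleGraph {s : Finset (Fin 5) // s.card = 2} where
  Adj a b := Disjoint a.1 b.1
  symm := ⟨fun _ _ h => h.symm⟩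
  loopless := ⟨by
    intro a h
    have h2 := a.2
    rw [disjoint_self.mp h] at h2
    simp at h2⟩

/-- `G` is `k`-connected: more than `k` vertices, and removing fewer than `k` vertices
leaves a connected graph. -/
def IsKConnected {V : Type} [Fintype V] (k : ℕ) (G : SimpleGraph V) : Prop :=
  k < Fintype.card V ∧ ∀ S : Set V, S.ncard < k → (G.induce Sᶜ).Connected

/-- `G - v` has a `K₄` minor rooted at the 4-element set `T` (with `v ∉ T`): four disjoint
branch sets avoiding `v`, each inducing a connected subgraph, each meeting `T` in exactly
one vertex, and pairwise joined by an edge. -/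
def HasRootedK4MinorAvoiding {V : Type} (G : SimpleGraph V) (T : Set V) (v : V) : Prop :=
  ∃ (t : Fin 4 → V) (B : Fin 4 → Set V),
    Function.Injective t ∧ Set.range t = T ∧
    (∀ i, v ∉ B i) ∧ (∀ i, B i ∩ T = {t i}) ∧
    (∀ i, (G.induce (B i)).Connected) ∧
    (Pairwise fun i j => Disjoint (B i) (B j)) ∧
    (Pairwise fun i j => ∃ a ∈ B i, ∃ b ∈ B j, G.Adj a b)



lemma aux_K5m {V : Type} [Fintype V] (G : SimpleGraph V)
    (hdeg : ∀ v : V, 6 ≤ (G.neighborSet v).ncard)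
    (S C : Set V)
    (hCS : ∀ v ∈ C, v ∉ S)
    (hclosed : ∀ v ∈ C, ∀ w, G.Adj v w → w ∈ C ∨ w ∈ S)
    (hS3 : 3 ≤ S.ncard) (hS4 : S.ncard ≤ 4)
    (hcard : C.ncard + S.ncard = 7) :
    ∃ s : Finset V, s.card = 5 ∧ ∃ e : Sym2 V,
      ∀ u ∈ s, ∀ v ∈ s, u ≠ v → s(u, v) ≠ e → G.Adj u v := by
  classical
  have hCSd : Disjoint C S := Set.disjoint_left.mpr hCS
  have hunion : (C ∪ S).ncard = 7 := by
    rw [Set.ncard_union_eq hCSd (Set.toFinite _) (Set.toFinite _), hcard]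
  have hfull : ∀ v ∈ C, ∀ w ∈ C ∪ S, w ≠ v → G.Adj v w := by
    intro v hv w hw hne
    have hsub : G.neighborSet v ⊆ (C ∪ S) \ {v} := by
      intro x hx
      have hadj : G.Adj v x := hx
      refine ⟨?_, ?_⟩
      · rcases hclosed v hv x hadj with h | h
        · exact Or.inl h
        · exact Or.inr h
      · simp only [Set.mem_singleton_iff]
        rintro rfl
        exact G.irrefl hadj
    have h1 : ((C ∪ S) \ {v}).ncard = 6 := by
      rw [Set.ncard_diff_singleton_of_mem (Set.mem_union_left S hv), hunion]
    have heq : G.neighborSet v = (C ∪ S) \ {v} :=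
      Set.eq_of_subset_of_ncard_le hsub (by rw [h1]; exact hdeg v) (Set.toFinite _)
    have : w ∈ G.neighborSet v := by
      rw [heq]; exact ⟨hw, by simpa using hne⟩
    exact this
  have hCmem : ∀ x, x ∈ C.toFinset ↔ x ∈ C := fun x => Set.mem_toFinset
  have hCcard : C.toFinset.card = C.ncard := (Set.ncard_eq_toFinset_card' C).symm
  rcases (by omega : S.ncard = 3 ∨ S.ncard = 4) with h3 | h4
  · -- |C| = 4, pick one vertex of S
    obtain ⟨t, ht⟩ : S.Nonempty := Set.nonempty_of_ncard_ne_zero (by omega)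
    have htC : t ∉ C.toFinset := fun h => hCS t ((hCmem t).mp h) ht
    refine ⟨insert t C.toFinset, ?_, s(t, t), ?_⟩
    · rw [Finset.card_insert_of_notMem htC, hCcard]; omega
    · intro u hu v hv hne _
      rcases Finset.mem_insert.mp hu with rfl | hu'
      · rcases Finset.mem_insert.mp hv with rfl | hv'
        · exact absurd rfl hne
        · exact (hfull v ((hCmem v).mp hv') u (Or.inr ht) hne).symm
      · rcases Finset.mem_insert.mp hv with rfl | hv'
        · exact hfull u ((hCmem u).mp hu') v (Or.inr ht) hne.symm
        · exact hfull u ((hCmem u).mp hu') v (Or.inl ((hCmem v).mp hv')) hne.symm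
  · -- |C| = 3, pick two vertices of S
    obtain ⟨t1, t2, ht1, ht2, htne⟩ :
        ∃ a b, a ∈ S ∧ b ∈ S ∧ a ≠ b := by
      rw [← Set.one_lt_ncard_iff (Set.toFinite _)]
      omega
    have ht2C : t2 ∉ C.toFinset := fun h => hCS t2 ((hCmem t2).mp h) ht2
    have ht1C : t1 ∉ insert t2 C.toFinset := by
      simp only [Finset.mem_insert]
      rintro (rfl | h)
      · exact htne rfl
      · exact hCS t1 ((hCmem t1).mp h) ht1
    refine ⟨insert t1 (insert t2 C.toFinset), ?_, s(t1, t2), ?_⟩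
    · rw [Finset.card_insert_of_notMem ht1C, Finset.card_insert_of_notMem ht2C, hCcard]
      omega
    · intro u hu v hv hne hne_e
      simp only [Finset.mem_insert] at hu hv
      rcases hu with rfl | rfl | hu' <;> rcases hv with rfl | rfl | hv'
      · exact absurd rfl hne
      · exact absurd rfl hne_e
      · exact (hfull v ((hCmem v).mp hv') u (Or.inr ht1) hne).symm
      · exact absurd (Sym2.eq_swap) hne_e
      · exact absurd rfl hne
      · exact (hfull v ((hCmem v).mp hv') u (Or.inr ht2) hne).symm
      · exact hfull u ((hCmem u).mp hu') v (Or.inr ht1) hne.symm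
      · exact hfull u ((hCmem u).mp hu') v (Or.inr ht2) hne.symm
      · exact hfull u ((hCmem u).mp hu') v (Or.inl ((hCmem v).mp hv')) hne.symm


theorem not_five_connected_K5_minus {V : Type} [Fintype V] (G : SimpleGraph V)
    (h7 : 7 ≤ Fintype.card V) (h11 : Fintype.card V ≤ 11)
    (hdeg : ∀ v : V, 6 ≤ (G.neighborSet v).ncard)
    (hnc : ¬ IsKConnected 5 G) :
    ∃ s : Finset V, s.card = 5 ∧ ∃ e : Sym2 V,
      ∀ u ∈ s, ∀ v ∈ s, u ≠ v → s(u, v) ≠ e → G.Adj u v := by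
  rw [IsKConnected] at hnc
  push_neg at hnc
  obtain ⟨S, hS5, hSnc⟩ := hnc (by omega)
  have hScompl : S.ncard + Sᶜ.ncard = Fintype.card V := by
    have := Set.ncard_add_ncard_compl S (Set.toFinite _) (Set.toFinite _)
    rwa [Nat.card_eq_fintype_card] at this
  have hne : (Sᶜ : Set V).Nonempty := Set.nonempty_of_ncard_ne_zero (by omega)
  have : Nonempty ↥(Sᶜ : Set V) := hne.to_subtype
  have hpre : ¬ (G.induce Sᶜ).Preconnected :=
    fun hp => hSnc ((SimpleGraph.connected_iff _).mpr ⟨hp, this⟩)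
  simp only [SimpleGraph.Preconnected, not_forall] at hpre
  obtain ⟨a, b, hab⟩ := hpre
  set C : Set V := {v : V | ∃ h : v ∈ Sᶜ, (G.induce Sᶜ).Reachable a ⟨v, h⟩} with hCdef
  set D : Set V := {v : V | ∃ h : v ∈ Sᶜ, (G.induce Sᶜ).Reachable b ⟨v, h⟩} with hDdef
  have haC : (a : V) ∈ C := ⟨a.2, by exact SimpleGraph.Reachable.refl _⟩
  have hbD : (b : V) ∈ D := ⟨b.2, by exact SimpleGraph.Reachable.refl _⟩
  have hCS : ∀ v ∈ C, v ∉ S := fun v hv => hv.1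
  have hDS : ∀ v ∈ D, v ∉ S := fun v hv => hv.1
  have hCcl : ∀ v ∈ C, ∀ w, G.Adj v w → w ∈ C ∨ w ∈ S := by
    intro v hv w hadj
    by_cases hw : w ∈ S
    · exact Or.inr hw
    · obtain ⟨hvS, hr⟩ := hv
      exact Or.inl ⟨hw, hr.trans (SimpleGraph.Adj.reachable (by exact hadj))⟩
  have hDcl : ∀ v ∈ D, ∀ w, G.Adj v w → w ∈ D ∨ w ∈ S := by
    intro v hv w hadj
    by_cases hw : w ∈ S
    · exact Or.inr hw
    · obtain ⟨hvS, hr⟩ := hv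
      exact Or.inl ⟨hw, hr.trans (SimpleGraph.Adj.reachable (by exact hadj))⟩
  have hCD : Disjoint C D := by
    rw [Set.disjoint_left]
    rintro x ⟨hx, hrC⟩ ⟨hx', hrD⟩
    exact hab (hrC.trans hrD.symm)
  have key : ∀ (X : Set V) (x : V), x ∈ X → (∀ v ∈ X, v ∉ S) →
      (∀ v ∈ X, ∀ w, G.Adj v w → w ∈ X ∨ w ∈ S) → 7 ≤ X.ncard + S.ncard := by
    intro X x hx hXS hXcl
    have hsub : G.neighborSet x ⊆ (X ∪ S) \ {x} := by
      intro w hw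
      have hadj : G.Adj x w := hw
      refine ⟨hXcl x hx w hadj, ?_⟩
      simp only [Set.mem_singleton_iff]
      rintro rfl
      exact G.irrefl hadj
    have h1 : (X ∪ S).ncard ≤ X.ncard + S.ncard := Set.ncard_union_le X S
    have h2 : ((X ∪ S) \ {x}).ncard = (X ∪ S).ncard - 1 :=
      Set.ncard_diff_singleton_of_mem (Set.mem_union_left S hx)
    have h3 : 6 ≤ ((X ∪ S) \ {x}).ncard :=
      le_trans (hdeg x) (Set.ncard_le_ncard hsub (Set.toFinite _))
    have h4 : 1 ≤ (X ∪ S).ncard :=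
      (Set.ncard_pos (Set.toFinite _)).mpr ⟨x, Set.mem_union_left S hx⟩
    omega
  have hC7 : 7 ≤ C.ncard + S.ncard := key C a haC hCS hCcl
  have hD7 : 7 ≤ D.ncard + S.ncard := key D b hbD hDS hDcl
  have hsum : C.ncard + D.ncard + S.ncard ≤ 11 := by
    have hCSd : Disjoint C S := Set.disjoint_left.mpr hCS
    have hDSd : Disjoint D S := Set.disjoint_left.mpr hDS
    have h1 : (C ∪ D ∪ S).ncard = C.ncard + D.ncard + S.ncard := by
      rw [Set.ncard_union_eq (by rw [Set.disjoint_union_left]; exact ⟨hCSd, hDSd⟩)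
        (Set.toFinite _) (Set.toFinite _),
        Set.ncard_union_eq hCD (Set.toFinite _) (Set.toFinite _)]
    have h2 : (C ∪ D ∪ S).ncard ≤ Fintype.card V := by
      have := Set.ncard_le_ncard (Set.subset_univ (C ∪ D ∪ S)) (Set.toFinite _)
      rwa [Set.ncard_univ, Nat.card_eq_fintype_card] at this
    omega
  have hS3 : 3 ≤ S.ncard := by omega
  rcases (by omega : C.ncard + S.ncard = 7 ∨ D.ncard + S.ncard = 7) with h | h
  · exact aux_K5m G hdeg S C hCS hCcl hS3 (by omega) h
  · exact aux_K5m G hdeg S D hDS hDcl hS3 (by omega) h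
end

section
/- Let G be a graph with 7 ≤ |V(G)| ≤ 11 and minimum degree at least 6 such that G is 4-connected but not 5-connected. Then for any set T of 5 vertices of G, there exists v ∈ T such that G - v has a K_4 minor rooted at T \ {v}. -/
open SimpleGraph

lemma induce_connected_hub {V : Type} (G : SimpleGraph V) (s : Set V) (hub : V) (h0 : hub ∈ s)
    (h : ∀ a ∈ s, a = hub ∨ G.Adj hub a) : (G.induce s).Connected := by
  rw [SimpleGraph.connected_iff]
  have key : ∀ a : s, (G.induce s).Reachable ⟨hub, h0⟩ a := by
    rintro ⟨a, ha⟩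
    rcases h a ha with h1 | h1
    · subst h1; exact Reachable.refl _
    · exact SimpleGraph.Adj.reachable (by simpa using h1)
  exact ⟨fun a b => (key a).symm.trans (key b), ⟨⟨hub, h0⟩⟩⟩

/-- SDR existence when strictly fewer elements than pool. -/
lemma sdr_lt {V : Type} [DecidableEq V] (G : SimpleGraph V) (R P : Finset V)
    (hm : ∀ r ∈ R, ∀ x ∈ P, ∀ y ∈ P, x ≠ y → G.Adj r x ∨ G.Adj r y)
    (hlt : R.card < P.card) :
    ∃ σ : V → V, Set.InjOn σ ↑R ∧ ∀ r ∈ R, σ r ∈ P ∧ G.Adj r (σ r) := by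
  classical
  induction R using Finset.induction generalizing P with
  | empty => exact ⟨id, by simp, by simp⟩
  | @insert r R' hr ih =>
    have h2 : 1 < P.card := by
      have := Finset.card_insert_of_notMem hr; omega
    obtain ⟨x, hx, y, hy, hxy⟩ := Finset.one_lt_card.mp h2
    have hadj : ∃ s ∈ P, G.Adj r s := by
      rcases hm r (Finset.mem_insert_self r R') x hx y hy hxy with h | h
      · exact ⟨x, hx, h⟩
      · exact ⟨y, hy, h⟩
    obtain ⟨s, hs, hrs⟩ := hadj
    have hlt' : R'.card < (P.erase s).card := by
      rw [Finset.card_erase_of_mem hs]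
      have := Finset.card_insert_of_notMem hr; omega
    obtain ⟨σ', hinj', hprop'⟩ := ih (P.erase s)
      (fun r' hr' x hx y hy hxy => hm r' (Finset.mem_insert_of_mem hr')
        x (Finset.mem_of_mem_erase hx) y (Finset.mem_of_mem_erase hy) hxy) hlt'
    refine ⟨fun z => if z = r then s else σ' z, ?_, ?_⟩
    · intro a ha b hb hab
      simp only [Finset.coe_insert, Set.mem_insert_iff] at ha hb
      by_cases h1 : a = r <;> by_cases h2 : b = r <;> simp [h1, h2] at hab ⊢
      · exact absurd hab.symm (Finset.ne_of_mem_erase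
          (hprop' b (hb.resolve_left h2)).1)
      · exact absurd hab (Finset.ne_of_mem_erase (hprop' a (ha.resolve_left h1)).1)
      · exact hinj' (ha.resolve_left h1) (hb.resolve_left h2) hab
    · intro r' hr'
      rcases Finset.mem_insert.mp hr' with h1 | h1
      · subst h1; simp [hs, hrs]
      · have hne : r' ≠ r := by rintro rfl; exact hr h1
        simp only [hne, if_neg, ite_false]
        exact ⟨Finset.mem_of_mem_erase (hprop' r' h1).1, (hprop' r' h1).2⟩

/-- SDR existence at equality, given no common non-neighbor in the pool. -/
lemma sdr_eq {V : Type} [DecidableEq V] (G : SimpleGraph V) (n : ℕ) :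
    ∀ (R P : Finset V), R.card = n → R.card = P.card →
    (∀ r ∈ R, ∀ x ∈ P, ∀ y ∈ P, x ≠ y → G.Adj r x ∨ G.Adj r y) →
    (∀ s ∈ P, ∃ r ∈ R, G.Adj r s) →
    ∃ σ : V → V, Set.InjOn σ ↑R ∧ ∀ r ∈ R, σ r ∈ P ∧ G.Adj r (σ r) := by
  classical
  induction n using Nat.strong_induction_on with
  | _ n ih =>
  intro R P hn hcard hm hnc
  rcases Finset.eq_empty_or_nonempty R with rfl | hRne
  · exact ⟨id, by simp, by simp⟩
  by_cases huniv : ∃ r0 ∈ R, ∀ s ∈ P, G.Adj r0 s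
  · -- r0 adjacent to everything: remove it, use sdr_lt
    obtain ⟨r0, hr0, hr0adj⟩ := huniv
    have hlt : (R.erase r0).card < P.card := by
      rw [Finset.card_erase_of_mem hr0]
      have : 0 < R.card := Finset.card_pos.mpr hRne
      omega
    obtain ⟨σ', hinj', hprop'⟩ := sdr_lt G (R.erase r0) P
      (fun r hr => hm r (Finset.mem_of_mem_erase hr)) hlt
    -- find an unused element of P
    have himg : ((R.erase r0).image σ').card < P.card := by
      rw [Finset.card_image_of_injOn (by exact_mod_cast hinj')]
      exact hlt
    have : ¬ (P ⊆ (R.erase r0).image σ') := fun hsub =>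
      absurd (Finset.card_le_card hsub) (by omega)
    obtain ⟨s0, hs0P, hs0ni⟩ := Finset.not_subset.mp this
    refine ⟨fun z => if z = r0 then s0 else σ' z, ?_, ?_⟩
    · intro a ha b hb hab
      simp only [Finset.mem_coe] at ha hb
      by_cases h1 : a = r0 <;> by_cases h2 : b = r0 <;> simp [h1, h2] at hab ⊢
      · exfalso
        apply hs0ni
        rw [hab]
        exact Finset.mem_image_of_mem _ (Finset.mem_erase.mpr ⟨h2, hb⟩)
      · exfalso
        apply hs0ni
        rw [← hab]
        exact Finset.mem_image_of_mem _ (Finset.mem_erase.mpr ⟨h1, ha⟩)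
      · exact hinj' (Finset.mem_coe.mpr (Finset.mem_erase.mpr ⟨h1, ha⟩))
          (Finset.mem_coe.mpr (Finset.mem_erase.mpr ⟨h2, hb⟩)) hab
    · intro r hr
      by_cases h1 : r = r0
      · subst h1; simp [hs0P, hr0adj s0 hs0P]
      · simp only [h1, if_neg, ite_false]
        exact hprop' r (Finset.mem_erase.mpr ⟨h1, hr⟩)
  · -- every r has a miss; misses are unique per r; not all the same
    push_neg at huniv
    -- choice of miss
    have hmiss : ∀ r ∈ R, ∃ s ∈ P, ¬ G.Adj r s := huniv
    obtain ⟨r1, hr1⟩ := hRne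
    obtain ⟨m1, hm1P, hm1⟩ := hmiss r1 hr1
    obtain ⟨r2, hr2, hr2adj⟩ := hnc m1 hm1P
    have hr12 : r2 ≠ r1 := fun h => hm1 (h ▸ hr2adj)
    obtain ⟨m2, hm2P, hm2⟩ := hmiss r2 hr2
    have hm12 : m2 ≠ m1 := fun h => hm2 (h ▸ hr2adj)
    -- r1 is adjacent to m2
    have hr1m2 : G.Adj r1 m2 := by
      rcases hm r1 hr1 m2 hm2P m1 hm1P hm12 with h | h
      · exact h
      · exact absurd h hm1
    -- recurse on R.erase r1, P.erase m2
    have hcard' : (R.erase r1).card = (P.erase m2).card := by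
      rw [Finset.card_erase_of_mem hr1, Finset.card_erase_of_mem hm2P, hcard]
    have hn' : (R.erase r1).card < n := by
      rw [Finset.card_erase_of_mem hr1]
      have : 0 < R.card := Finset.card_pos.mpr ⟨r1, hr1⟩
      omega
    have hnc' : ∀ s ∈ P.erase m2, ∃ r ∈ R.erase r1, G.Adj r s := by
      intro s hs
      have hsP := Finset.mem_of_mem_erase hs
      have hsm2 : s ≠ m2 := Finset.ne_of_mem_erase hs
      by_cases hadj : G.Adj r2 s
      · exact ⟨r2, Finset.mem_erase.mpr ⟨hr12, hr2⟩, hadj⟩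
      · -- then s must be m2, contradiction
        exfalso
        rcases hm r2 hr2 s hsP m2 hm2P hsm2 with h | h
        · exact hadj h
        · exact hm2 h
    obtain ⟨σ', hinj', hprop'⟩ := ih (R.erase r1).card hn' (R.erase r1) (P.erase m2) rfl hcard'
      (fun r hr x hx y hy => hm r (Finset.mem_of_mem_erase hr) x (Finset.mem_of_mem_erase hx)
        y (Finset.mem_of_mem_erase hy)) hnc'
    refine ⟨fun z => if z = r1 then m2 else σ' z, ?_, ?_⟩
    · intro a ha b hb hab
      simp only [Finset.mem_coe] at ha hb
      by_cases h1 : a = r1 <;> by_cases h2 : b = r1 <;> simp [h1, h2] at hab ⊢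
      · exact absurd hab.symm (Finset.ne_of_mem_erase
          (hprop' b (Finset.mem_erase.mpr ⟨h2, hb⟩)).1)
      · exact absurd hab (Finset.ne_of_mem_erase
          (hprop' a (Finset.mem_erase.mpr ⟨h1, ha⟩)).1)
      · exact hinj' (Finset.mem_coe.mpr (Finset.mem_erase.mpr ⟨h1, ha⟩))
          (Finset.mem_coe.mpr (Finset.mem_erase.mpr ⟨h2, hb⟩)) hab
    · intro r hr
      by_cases h1 : r = r1
      · subst h1; simp [hm2P, hr1m2]
      · simp only [h1, if_neg, ite_false]
        obtain ⟨h2, h3⟩ := hprop' r (Finset.mem_erase.mpr ⟨h1, hr⟩)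
        exact ⟨Finset.mem_of_mem_erase h2, h3⟩

lemma main_con {V : Type} [Fintype V] [DecidableEq V] (G : SimpleGraph V)
    (S A B : Finset V) (hS : S.card = 4) (hA : A.card = 3) (hB : B.card ≤ 4)
    (hUnion : ∀ x : V, x ∈ A ∨ x ∈ S ∨ x ∈ B)
    (hAS : ∀ x, x ∈ A → x ∈ S → False)
    (hBS : ∀ x, x ∈ B → x ∈ S → False)
    (hABd : ∀ x, x ∈ A → x ∈ B → False)
    (hF1 : ∀ a ∈ A, ∀ x, (x ∈ A ∨ x ∈ S) → x ≠ a → G.Adj a x)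
    (hF2 : ∀ b ∈ B, ∀ x y, (x ∈ B ∨ x ∈ S) → (y ∈ B ∨ y ∈ S) → x ≠ b → y ≠ b → x ≠ y →
      ¬G.Adj b x → ¬G.Adj b y → False)
    (T : Finset V) (hT : T.card = 5) :
    ∃ v ∈ T, HasRootedK4MinorAvoiding G (↑T \ {v}) v := by
  classical
  -- choose v
  have hv : ∃ v ∈ T, v ∉ A ∧ (v ∈ B ∨ (v ∈ S ∧ ∀ x ∈ T, x ∉ B)) := by
    by_cases hTB : ∃ x ∈ T, x ∈ B
    · obtain ⟨v, hvT, hvB⟩ := hTB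
      exact ⟨v, hvT, fun h => hABd v h hvB, Or.inl hvB⟩
    · push_neg at hTB
      have hvS : ∃ v ∈ T, v ∈ S := by
        by_contra h
        push_neg at h
        have hsub : T ⊆ A := by
          intro x hx
          rcases hUnion x with h1 | h1 | h1
          · exact h1
          · exact absurd h1 (h x hx)
          · exact absurd h1 (hTB x hx)
        have := Finset.card_le_card hsub
        omega
      obtain ⟨v, hvT, hvS⟩ := hvS
      exact ⟨v, hvT, fun h => hAS v h hvS, Or.inr ⟨hvS, hTB⟩⟩
  obtain ⟨v, hvT, hvA, hcase⟩ := hv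
  refine ⟨v, hvT, ?_⟩
  set T' := T.erase v with hT'def
  have hT'card : T'.card = 4 := by rw [hT'def, Finset.card_erase_of_mem hvT, hT]
  set e := T'.equivFinOfCardEq hT'card with he
  set t : Fin 4 → V := fun i => ↑(e.symm i) with htdef
  have ht_mem : ∀ i, t i ∈ T' := fun i => (e.symm i).2
  have ht_inj : Function.Injective t := by
    intro i j h
    have : e.symm i = e.symm j := Subtype.ext h
    exact e.symm.injective this
  have ht_surj : ∀ z ∈ T', ∃ i, t i = z := by
    intro z hz
    exact ⟨e ⟨z, hz⟩, by simp [htdef]⟩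
  have htT : ∀ i, t i ∈ T := fun i => Finset.mem_of_mem_erase (ht_mem i)
  have htv : ∀ i, t i ≠ v := fun i => Finset.ne_of_mem_erase (ht_mem i)
  have ht_range : Set.range t = (↑T : Set V) \ {v} := by
    ext z
    constructor
    · rintro ⟨i, rfl⟩
      exact ⟨htT i, htv i⟩
    · rintro ⟨h1, h2⟩
      exact ht_surj z (Finset.mem_erase.mpr ⟨h2, by exact_mod_cast h1⟩)
  -- card transfer
  have card_filter : ∀ X : Finset V,
      (Finset.univ.filter (fun i => t i ∈ X)).card = (T' ∩ X).card := by
    intro X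
    apply Finset.card_bij (fun i _ => t i)
    · intro i hi
      simp only [Finset.mem_filter] at hi
      exact Finset.mem_inter.mpr ⟨ht_mem i, hi.2⟩
    · intro i _ j _ h
      exact ht_inj h
    · intro z hz
      obtain ⟨hz1, hz2⟩ := Finset.mem_inter.mp hz
      obtain ⟨i, rfl⟩ := ht_surj z hz1
      exact ⟨i, Finset.mem_filter.mpr ⟨Finset.mem_univ i, hz2⟩, rfl⟩
  -- partition cardinalities for T
  have hTsplit : (T ∩ A).card + (T ∩ S).card + (T ∩ B).card = 5 := by
    have h1 : (T ∩ A) ∪ ((T ∩ S) ∪ (T ∩ B)) = T := by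
      ext x
      simp only [Finset.mem_union, Finset.mem_inter]
      constructor
      · rintro ((⟨h, _⟩) | (⟨h, _⟩ | ⟨h, _⟩)) <;> exact h
      · intro hx
        rcases hUnion x with h | h | h
        · exact Or.inl ⟨hx, h⟩
        · exact Or.inr (Or.inl ⟨hx, h⟩)
        · exact Or.inr (Or.inr ⟨hx, h⟩)
    have d1 : Disjoint (T ∩ S) (T ∩ B) := by
      rw [Finset.disjoint_left]
      intro x hx1 hx2
      exact hBS x (Finset.mem_inter.mp hx2).2 (Finset.mem_inter.mp hx1).2
    have d2 : Disjoint (T ∩ A) ((T ∩ S) ∪ (T ∩ B)) := by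
      rw [Finset.disjoint_left]
      intro x hx1 hx2
      rcases Finset.mem_union.mp hx2 with h | h
      · exact hAS x (Finset.mem_inter.mp hx1).2 (Finset.mem_inter.mp h).2
      · exact hABd x (Finset.mem_inter.mp hx1).2 (Finset.mem_inter.mp h).2
    have h2 : ((T ∩ A) ∪ ((T ∩ S) ∪ (T ∩ B))).card
        = (T ∩ A).card + ((T ∩ S).card + (T ∩ B).card) := by
      rw [Finset.card_union_of_disjoint d2, Finset.card_union_of_disjoint d1]
    rw [h1] at h2
    omega
  -- pool and A-helpers
  have hP : (S \ T).card + (T ∩ S).card = 4 := by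
    have := Finset.card_inter_add_card_sdiff S T
    rw [hS, Finset.inter_comm] at this
    omega
  have hAT : (A \ T).card + (T ∩ A).card = 3 := by
    have := Finset.card_inter_add_card_sdiff A T
    rw [hA, Finset.inter_comm] at this
    omega
  -- T' versions
  have hT'A : T' ∩ A = T ∩ A := by
    ext x
    simp only [Finset.mem_inter, hT'def, Finset.mem_erase]
    constructor
    · rintro ⟨⟨_, h2⟩, h3⟩; exact ⟨h2, h3⟩
    · rintro ⟨h2, h3⟩
      exact ⟨⟨fun hxv => hvA (hxv ▸ h3), h2⟩, h3⟩
  -- miss hypothesis for SDR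
  have hmiss : ∀ r ∈ T' ∩ B, ∀ x ∈ S \ T, ∀ y ∈ S \ T, x ≠ y → G.Adj r x ∨ G.Adj r y := by
    intro r hr x hx y hy hxy
    have hrB := (Finset.mem_inter.mp hr).2
    have hxS := (Finset.mem_sdiff.mp hx).1
    have hyS := (Finset.mem_sdiff.mp hy).1
    by_contra h
    push_neg at h
    exact hF2 r hrB x y (Or.inr hxS) (Or.inr hyS)
      (fun hc => hBS r hrB (hc ▸ hxS)) (fun hc => hBS r hrB (hc ▸ hyS)) hxy h.1 h.2
  have hble : (T' ∩ B).card ≤ (S \ T).card := by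
    rcases hcase with hvB | ⟨hvS, hTBe⟩
    · have h1 : T ∩ B = insert v (T' ∩ B) := by
        ext x
        simp only [Finset.mem_inter, Finset.mem_insert, hT'def, Finset.mem_erase]
        constructor
        · rintro ⟨h2, h3⟩
          by_cases hxv : x = v
          · exact Or.inl hxv
          · exact Or.inr ⟨⟨hxv, h2⟩, h3⟩
        · rintro (rfl | ⟨⟨_, h2⟩, h3⟩)
          · exact ⟨hvT, hvB⟩
          · exact ⟨h2, h3⟩
      have h2 : v ∉ T' ∩ B := by
        simp [hT'def]
      have h3 : (T ∩ B).card = (T' ∩ B).card + 1 := by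
        rw [h1, Finset.card_insert_of_notMem h2]
      have h4 : T' ∩ S = T ∩ S := by
        ext x
        simp only [Finset.mem_inter, hT'def, Finset.mem_erase]
        constructor
        · rintro ⟨⟨_, h5⟩, h6⟩; exact ⟨h5, h6⟩
        · rintro ⟨h5, h6⟩
          exact ⟨⟨fun hxv => hBS v hvB (hxv ▸ h6), h5⟩, h6⟩
      omega
    · have : T' ∩ B = ∅ := by
        rw [Finset.eq_empty_iff_forall_notMem]
        intro x hx
        obtain ⟨hx1, hx2⟩ := Finset.mem_inter.mp hx
        exact hTBe x (Finset.mem_of_mem_erase hx1) hx2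
      simp [this]
  -- MODE 1
  have mode1 : ∀ σ : V → V, Set.InjOn σ ↑(T' ∩ B) →
      (∀ r ∈ T' ∩ B, σ r ∈ S \ T ∧ G.Adj r (σ r)) →
      HasRootedK4MinorAvoiding G ((↑T : Set V) \ {v}) v := by
    intro σ hσinj hσ
    -- pick i₀ with t i₀ ∉ A
    have hi0ex : ∃ i : Fin 4, t i ∉ A := by
      by_contra h
      push_neg at h
      have hsub : T' ⊆ A := by
        intro z hz
        obtain ⟨i, rfl⟩ := ht_surj z hz
        exact h i
      have := Finset.card_le_card hsub
      omega
    obtain ⟨i₀, hi₀⟩ := hi0ex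
    set D : Finset (Fin 4) :=
      (Finset.univ.filter (fun i => t i ∉ A)).erase i₀ with hDdef
    have hi₀f : i₀ ∈ Finset.univ.filter (fun i : Fin 4 => t i ∉ A) :=
      Finset.mem_filter.mpr ⟨Finset.mem_univ _, hi₀⟩
    have hDcard : D.card = (A \ T).card := by
      have hfil := Finset.card_filter_add_card_filter_not
        (s := (Finset.univ : Finset (Fin 4))) (p := fun i => t i ∈ A)
      have hcf := card_filter A
      rw [hT'A] at hcf
      have hcompl : (Finset.univ.filter (fun i : Fin 4 => t i ∉ A))
          = Finset.univ.filter (fun i : Fin 4 => ¬ t i ∈ A) := rfl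
      have hcard4 : (Finset.univ : Finset (Fin 4)).card = 4 := by simp
      have hTA3 : (T ∩ A).card ≤ 3 := by
        have : T ∩ A ⊆ A := Finset.inter_subset_right
        have := Finset.card_le_card this
        omega
      rw [hDdef, Finset.card_erase_of_mem hi₀f]
      omega
    have hDmem : ∀ i, i ∈ D ↔ (i ≠ i₀ ∧ t i ∉ A) := by
      intro i
      simp only [hDdef, Finset.mem_erase, Finset.mem_filter, Finset.mem_univ, true_and]
    -- build α
    obtain ⟨αe⟩ : Nonempty ({x // x ∈ D} ≃ {x // x ∈ (A \ T)}) := by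
      have h1 := Finset.equivFin D
      have h2 := Finset.equivFin (A \ T)
      rw [hDcard] at h1
      exact ⟨h1.trans h2.symm⟩
    set α : Fin 4 → V := fun i => if h : i ∈ D then ↑(αe ⟨i, h⟩) else v with hαdef
    have hα1 : ∀ i ∈ D, α i ∈ A \ T := by
      intro i hi
      simp only [hαdef, dif_pos hi]
      exact (αe ⟨i, hi⟩).2
    have hα2 : ∀ i ∈ D, ∀ j ∈ D, α i = α j → i = j := by
      intro i hi j hj h
      simp only [hαdef, dif_pos hi, dif_pos hj] at h
      have := αe.injective (Subtype.ext h)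
      exact Subtype.ext_iff.mp this
    set Bs : Fin 4 → Set V := fun i =>
      {x | x = t i ∨ (t i ∈ B ∧ x = σ (t i)) ∨ (i ∈ D ∧ x = α i)} with hBdef
    have htiB : ∀ i, t i ∈ B → (σ (t i) ∈ S \ T ∧ G.Adj (t i) (σ (t i))) := fun i h =>
      hσ (t i) (Finset.mem_inter.mpr ⟨ht_mem i, h⟩)
    have hdisj : Pairwise fun i j => Disjoint (Bs i) (Bs j) := by
      intro i j hij
      rw [Set.disjoint_left]
      intro x hxi hxj
      simp only [hBdef, Set.mem_setOf_eq] at hxi hxj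
      rcases hxi with rfl | ⟨hiB, rfl⟩ | ⟨hiD, rfl⟩ <;>
        rcases hxj with h | ⟨hjB, h⟩ | ⟨hjD, h⟩
      · exact hij (ht_inj h)
      · have h2 := Finset.mem_sdiff.mp (htiB j hjB).1
        exact h2.2 (h ▸ htT i)
      · have h2 := Finset.mem_sdiff.mp (hα1 j hjD)
        exact h2.2 (h ▸ htT i)
      · have h2 := Finset.mem_sdiff.mp (htiB i hiB).1
        exact h2.2 (by rw [h]; exact htT j)
      · have hii : t i ∈ T' ∩ B := Finset.mem_inter.mpr ⟨ht_mem i, hiB⟩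
        have hjj : t j ∈ T' ∩ B := Finset.mem_inter.mpr ⟨ht_mem j, hjB⟩
        have := hσinj (Finset.mem_coe.mpr hii) (Finset.mem_coe.mpr hjj) h
        exact hij (ht_inj this)
      · have hαA := (Finset.mem_sdiff.mp (hα1 j hjD)).1
        have hσS := (Finset.mem_sdiff.mp (htiB i hiB).1).1
        exact hAS (α j) hαA (by rw [← h]; exact hσS)
      · have h2 := Finset.mem_sdiff.mp (hα1 i hiD)
        exact h2.2 (by rw [h]; exact htT j)
      · have hαA := (Finset.mem_sdiff.mp (hα1 i hiD)).1
        have hσS := (Finset.mem_sdiff.mp (htiB j hjB).1).1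
        exact hAS (α i) hαA (by rw [h]; exact hσS)
      · exact hij (hα2 i hiD j hjD h)
    have hconn : ∀ i, (G.induce (Bs i)).Connected := by
      intro i
      by_cases hiB : t i ∈ B
      · apply induce_connected_hub G (Bs i) (σ (t i)) (Or.inr (Or.inl ⟨hiB, rfl⟩))
        intro a ha
        rcases ha with rfl | ⟨_, rfl⟩ | ⟨hiD, rfl⟩
        · exact Or.inr ((htiB i hiB).2.symm)
        · exact Or.inl rfl
        · have hαA := (Finset.mem_sdiff.mp (hα1 i hiD)).1
          have hσS := (Finset.mem_sdiff.mp (htiB i hiB).1).1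
          exact Or.inr (hF1 (α i) hαA (σ (t i)) (Or.inr hσS)
            (fun hc => hAS (α i) hαA (hc ▸ hσS))).symm
      · apply induce_connected_hub G (Bs i) (t i) (Or.inl rfl)
        intro a ha
        rcases ha with rfl | ⟨hB', _⟩ | ⟨hiD, rfl⟩
        · exact Or.inl rfl
        · exact absurd hB' hiB
        · have hti : t i ∈ S := by
            rcases hUnion (t i) with h | h | h
            · exact absurd h ((hDmem i).mp hiD).2
            · exact h
            · exact absurd h hiB
          have hαA := (Finset.mem_sdiff.mp (hα1 i hiD)).1
          have hαT := (Finset.mem_sdiff.mp (hα1 i hiD)).2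
          exact Or.inr (hF1 (α i) hαA (t i) (Or.inr hti)
            (fun hc => hαT (hc ▸ htT i))).symm
    have hwitA : ∀ j, j ≠ i₀ → ∃ w ∈ Bs j, w ∈ A := by
      intro j hj
      by_cases h : t j ∈ A
      · exact ⟨t j, Or.inl rfl, h⟩
      · have hjD : j ∈ D := (hDmem j).mpr ⟨hj, h⟩
        exact ⟨α j, Or.inr (Or.inr ⟨hjD, rfl⟩), (Finset.mem_sdiff.mp (hα1 j hjD)).1⟩
    have hwitAS : ∀ i, ∃ w ∈ Bs i, w ∈ A ∨ w ∈ S := by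
      intro i
      by_cases h : t i ∈ B
      · exact ⟨σ (t i), Or.inr (Or.inl ⟨h, rfl⟩),
          Or.inr (Finset.mem_sdiff.mp (htiB i h).1).1⟩
      · refine ⟨t i, Or.inl rfl, ?_⟩
        rcases hUnion (t i) with h1 | h1 | h1
        · exact Or.inl h1
        · exact Or.inr h1
        · exact absurd h1 h
    have key : ∀ i j, i ≠ j → j ≠ i₀ → ∃ a ∈ Bs i, ∃ b ∈ Bs j, G.Adj b a := by
      intro i j hij hj
      obtain ⟨w, hwB, hwA⟩ := hwitA j hj
      obtain ⟨u, huB, huAS⟩ := hwitAS i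
      have hne : u ≠ w := by
        intro h
        exact Set.disjoint_left.mp (hdisj hij) huB (by rw [h]; exact hwB)
      exact ⟨u, huB, w, hwB, hF1 w hwA u huAS hne⟩
    have hedges : Pairwise fun i j => ∃ a ∈ Bs i, ∃ b ∈ Bs j, G.Adj a b := by
      intro i j hij
      by_cases hj : j = i₀
      · obtain ⟨a, ha, b, hb, hadj⟩ := key j i (Ne.symm hij) (by rw [← hj]; exact hij)
        exact ⟨b, hb, a, ha, hadj⟩
      · obtain ⟨a, ha, b, hb, hadj⟩ := key i j hij hj
        exact ⟨a, ha, b, hb, hadj.symm⟩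
    refine ⟨t, Bs, ht_inj, ht_range, ?_, ?_, hconn, hdisj, hedges⟩
    · intro i hv
      rcases hv with h | ⟨hiB, h⟩ | ⟨hiD, h⟩
      · exact htv i h.symm
      · exact (Finset.mem_sdiff.mp (htiB i hiB).1).2 (h ▸ hvT)
      · exact (Finset.mem_sdiff.mp (hα1 i hiD)).2 (h ▸ hvT)
    · intro i
      ext x
      simp only [Set.mem_inter_iff, Set.mem_singleton_iff, Set.mem_diff]
      constructor
      · rintro ⟨hx1, hx2, _⟩
        rcases hx1 with rfl | ⟨hiB, rfl⟩ | ⟨hiD, rfl⟩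
        · rfl
        · exact absurd (Finset.mem_coe.mp hx2)
            (Finset.mem_sdiff.mp (htiB i hiB).1).2
        · exact absurd (Finset.mem_coe.mp hx2) (Finset.mem_sdiff.mp (hα1 i hiD)).2
      · rintro rfl
        exact ⟨Or.inl rfl, Finset.mem_coe.mpr (htT i), htv i⟩
  by_cases hlt : (T' ∩ B).card < (S \ T).card
  · obtain ⟨σ, h1, h2⟩ := sdr_lt G (T' ∩ B) (S \ T) hmiss hlt
    exact mode1 σ h1 h2
  · have heq : (T' ∩ B).card = (S \ T).card := le_antisymm hble (not_lt.mp hlt)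
    by_cases hcm : ∃ s ∈ S \ T, ∀ r ∈ T' ∩ B, ¬ G.Adj r s
    · -- MODE 2
      obtain ⟨sstar, hsstarP, hsmiss⟩ := hcm
      have hPpos : 0 < (S \ T).card := Finset.card_pos.mpr ⟨sstar, hsstarP⟩
      have hvB : v ∈ B := by
        rcases hcase with h | ⟨_, hTBe⟩
        · exact h
        · exfalso
          have hemp : T' ∩ B = ∅ := by
            rw [Finset.eq_empty_iff_forall_notMem]
            intro x hx
            obtain ⟨hx1, hx2⟩ := Finset.mem_inter.mp hx
            exact hTBe x (Finset.mem_of_mem_erase hx1) hx2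
          rw [hemp] at heq
          simp at heq
          omega
      have h1 : T ∩ B = insert v (T' ∩ B) := by
        ext x
        simp only [Finset.mem_inter, Finset.mem_insert, hT'def, Finset.mem_erase]
        constructor
        · rintro ⟨h2, h3⟩
          by_cases hxv : x = v
          · exact Or.inl hxv
          · exact Or.inr ⟨⟨hxv, h2⟩, h3⟩
        · rintro (rfl | ⟨⟨_, h2⟩, h3⟩)
          · exact ⟨hvT, hvB⟩
          · exact ⟨h2, h3⟩
      have h2 : v ∉ T' ∩ B := by simp [hT'def]
      have h3 : (T ∩ B).card = (T' ∩ B).card + 1 := by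
        rw [h1, Finset.card_insert_of_notMem h2]
      have h4 : T' ∩ S = T ∩ S := by
        ext x
        simp only [Finset.mem_inter, hT'def, Finset.mem_erase]
        constructor
        · rintro ⟨⟨_, h5⟩, h6⟩; exact ⟨h5, h6⟩
        · rintro ⟨h5, h6⟩
          exact ⟨⟨fun hxv => hBS v hvB (hxv ▸ h6), h5⟩, h6⟩
      have na0 : (T ∩ A).card = 0 := by omega
      have hnoA : ∀ i, t i ∉ A := by
        intro i h
        have hmem : t i ∈ T ∩ A := Finset.mem_inter.mpr ⟨htT i, h⟩
        rw [Finset.card_eq_zero] at na0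
        rw [na0] at hmem
        exact absurd hmem (Finset.notMem_empty _)
      have hAT3 : (A \ T).card = 3 := by omega
      set Ds : Finset (Fin 4) := Finset.univ.filter (fun i => t i ∈ S) with hDsdef
      have hDscard : Ds.card ≤ 3 := by
        have := card_filter S
        rw [h4] at this
        rw [hDsdef, this]
        omega
      obtain ⟨A', hA'sub, hA'card⟩ :=
        Finset.exists_subset_card_eq (show Ds.card ≤ (A \ T).card by omega)
      obtain ⟨αe⟩ : Nonempty ({x // x ∈ Ds} ≃ {x // x ∈ A'}) := by
        have e1 := Finset.equivFin Ds
        have e2 := Finset.equivFin A'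
        rw [hA'card] at e2
        exact ⟨e1.trans e2.symm⟩
      set α : Fin 4 → V := fun i => if h : i ∈ Ds then ↑(αe ⟨i, h⟩) else v with hαdef
      have hα1 : ∀ i ∈ Ds, α i ∈ A \ T := by
        intro i hi
        simp only [hαdef, dif_pos hi]
        exact hA'sub (αe ⟨i, hi⟩).2
      have hα2 : ∀ i ∈ Ds, ∀ j ∈ Ds, α i = α j → i = j := by
        intro i hi j hj h
        simp only [hαdef, dif_pos hi, dif_pos hj] at h
        exact Subtype.ext_iff.mp (αe.injective (Subtype.ext h))
      have htiS : ∀ i ∈ Ds, t i ∈ S := fun i hi => (Finset.mem_filter.mp hi).2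
      have hBadj : ∀ i, t i ∈ B → ∀ x, (x ∈ B ∨ x ∈ S) → x ≠ t i → x ≠ sstar →
          G.Adj (t i) x := by
        intro i hiB x hx hx1 hx2
        by_contra hna
        have hsS := (Finset.mem_sdiff.mp hsstarP).1
        exact hF2 (t i) hiB sstar x (Or.inr hsS) hx
          (fun hc => hBS (t i) hiB (hc ▸ hsS)) hx1 (fun hc => hx2 hc.symm)
          (hsmiss (t i) (Finset.mem_inter.mpr ⟨ht_mem i, hiB⟩)) hna
      set Bs : Fin 4 → Set V := fun i => {x | x = t i ∨ (i ∈ Ds ∧ x = α i)} with hBdef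
      have loc : ∀ k, t k ∈ S ∨ t k ∈ B := fun k => (hUnion (t k)).resolve_left (hnoA k)
      have hdisj : Pairwise fun i j => Disjoint (Bs i) (Bs j) := by
        intro i j hij
        rw [Set.disjoint_left]
        intro x hxi hxj
        simp only [hBdef, Set.mem_setOf_eq] at hxi hxj
        rcases hxi with rfl | ⟨hiD, rfl⟩ <;> rcases hxj with h | ⟨hjD, h⟩
        · exact hij (ht_inj h)
        · exact (Finset.mem_sdiff.mp (hα1 j hjD)).2 (h ▸ htT i)
        · exact (Finset.mem_sdiff.mp (hα1 i hiD)).2 (by rw [h]; exact htT j)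
        · exact hij (hα2 i hiD j hjD h)
      have hconn : ∀ i, (G.induce (Bs i)).Connected := by
        intro i
        apply induce_connected_hub G (Bs i) (t i) (Or.inl rfl)
        intro a ha
        rcases ha with rfl | ⟨hiD, rfl⟩
        · exact Or.inl rfl
        · have hαA := (Finset.mem_sdiff.mp (hα1 i hiD)).1
          have hαT := (Finset.mem_sdiff.mp (hα1 i hiD)).2
          exact Or.inr (hF1 (α i) hαA (t i) (Or.inr (htiS i hiD))
            (fun hc => hαT (hc ▸ htT i))).symm
      have hedges : Pairwise fun i j => ∃ a ∈ Bs i, ∃ b ∈ Bs j, G.Adj a b := by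
        intro i j hij
        by_cases hiB : t i ∈ B
        · have hne : t j ≠ t i := fun h => hij (ht_inj h).symm
          have hns : t j ≠ sstar := fun h => (Finset.mem_sdiff.mp hsstarP).2 (h ▸ htT j)
          exact ⟨t i, Or.inl rfl, t j, Or.inl rfl,
            hBadj i hiB (t j) (loc j).symm hne hns⟩
        · have hiS : t i ∈ S := (loc i).resolve_right hiB
          have hiDs : i ∈ Ds := Finset.mem_filter.mpr ⟨Finset.mem_univ _, hiS⟩
          by_cases hjB : t j ∈ B
          · have hne : t i ≠ t j := fun h => hij (ht_inj h)
            have hns : t i ≠ sstar := fun h =>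
              (Finset.mem_sdiff.mp hsstarP).2 (h ▸ htT i)
            exact ⟨t i, Or.inl rfl, t j, Or.inl rfl,
              (hBadj j hjB (t i) (Or.inr hiS) hne hns).symm⟩
          · have hjS : t j ∈ S := (loc j).resolve_right hjB
            have hαA := (Finset.mem_sdiff.mp (hα1 i hiDs)).1
            have hαT := (Finset.mem_sdiff.mp (hα1 i hiDs)).2
            exact ⟨α i, Or.inr ⟨hiDs, rfl⟩, t j, Or.inl rfl,
              hF1 (α i) hαA (t j) (Or.inr hjS) (fun hc => hαT (hc ▸ htT j))⟩
      refine ⟨t, Bs, ht_inj, ht_range, ?_, ?_, hconn, hdisj, hedges⟩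
      · intro i hv
        rcases hv with h | ⟨hiD, h⟩
        · exact htv i h.symm
        · exact (Finset.mem_sdiff.mp (hα1 i hiD)).2 (h ▸ hvT)
      · intro i
        ext x
        simp only [Set.mem_inter_iff, Set.mem_singleton_iff, Set.mem_diff]
        constructor
        · rintro ⟨hx1, hx2, _⟩
          rcases hx1 with rfl | ⟨hiD, rfl⟩
          · rfl
          · exact absurd (Finset.mem_coe.mp hx2) (Finset.mem_sdiff.mp (hα1 i hiD)).2
        · rintro rfl
          exact ⟨Or.inl rfl, Finset.mem_coe.mpr (htT i), htv i⟩
    · push_neg at hcm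
      obtain ⟨σ, h1, h2⟩ := sdr_eq G (T' ∩ B).card (T' ∩ B) (S \ T) rfl heq hmiss hcm
      exact mode1 σ h1 h2



theorem rooted_K4_of_four_connected {V : Type} [Fintype V] (G : SimpleGraph V)
    (h7 : 7 ≤ Fintype.card V) (h11 : Fintype.card V ≤ 11)
    (hdeg : ∀ v : V, 6 ≤ (G.neighborSet v).ncard)
    (h4c : IsKConnected 4 G) (h5c : ¬ IsKConnected 5 G)
    (T : Finset V) (hT : T.card = 5) :
    ∃ v ∈ T, HasRootedK4MinorAvoiding G ((T : Set V) \ {v}) v := by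
  classical
  have h5lt : 5 < Fintype.card V := by omega
  have hexS : ∃ S0 : Set V, S0.ncard < 5 ∧ ¬ (G.induce S0ᶜ).Connected := by
    have h : ¬ ∀ S : Set V, S.ncard < 5 → (G.induce Sᶜ).Connected :=
      fun hb => h5c ⟨h5lt, hb⟩
    push_neg at h
    exact h
  obtain ⟨S0, hS0lt, hS0nc⟩ := hexS
  have hS0ge : 4 ≤ S0.ncard := by
    by_contra h
    push_neg at h
    exact hS0nc (h4c.2 S0 h)
  have hS0card : S0.ncard = 4 := by omega
  have hcompl : S0.ncard + S0ᶜ.ncard = Fintype.card V := by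
    rw [Set.ncard_add_ncard_compl, Nat.card_eq_fintype_card]
  have hcne : (S0ᶜ : Set V).Nonempty := by
    rw [← Set.ncard_pos]
    omega
  have hnp : ¬ (G.induce S0ᶜ).Preconnected := by
    intro h
    exact hS0nc ((SimpleGraph.connected_iff _).mpr ⟨h, hcne.to_subtype⟩)
  rw [SimpleGraph.Preconnected] at hnp
  push_neg at hnp
  obtain ⟨x, y, hxy⟩ := hnp
  set A0 : Set V := {z | ∃ hz : z ∈ (S0ᶜ : Set V), (G.induce S0ᶜ).Reachable x ⟨z, hz⟩}
    with hA0def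
  set B0 : Set V := S0ᶜ \ A0 with hB0def
  have hA0sub : A0 ⊆ S0ᶜ := by
    intro z hz
    exact hz.choose
  have hB0sub : B0 ⊆ S0ᶜ := fun z hz => hz.1
  have hxA : ↑x ∈ A0 := ⟨x.2, Reachable.refl x⟩
  have hyB : ↑y ∈ B0 := by
    refine ⟨y.2, fun hz => ?_⟩
    obtain ⟨h1, h2⟩ := hz
    exact hxy h2
  have hunion0 : A0 ∪ B0 = S0ᶜ := Set.union_diff_cancel hA0sub
  have hdisj0 : Disjoint A0 B0 := Set.disjoint_sdiff_right
  have hnoedge : ∀ a ∈ A0, ∀ b ∈ B0, ¬ G.Adj a b := by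
    rintro a ⟨ha, hra⟩ b ⟨hb, hnb⟩ hadj
    refine hnb ⟨hb, hra.trans (SimpleGraph.Adj.reachable ?_)⟩
    show (G.induce S0ᶜ).Adj ⟨a, ha⟩ ⟨b, hb⟩
    simpa using hadj
  have hNA : ∀ a ∈ A0, G.neighborSet a ⊆ (A0 ∪ S0) \ {a} := by
    intro a ha n hn
    rw [SimpleGraph.mem_neighborSet] at hn
    constructor
    · by_cases hnS : n ∈ S0
      · exact Or.inr hnS
      · left
        by_contra hnA
        exact hnoedge a ha n ⟨hnS, hnA⟩ hn
    · exact fun h => (G.ne_of_adj hn) (Set.mem_singleton_iff.mp h).symm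
  have hNB : ∀ b ∈ B0, G.neighborSet b ⊆ (B0 ∪ S0) \ {b} := by
    intro b hb n hn
    rw [SimpleGraph.mem_neighborSet] at hn
    constructor
    · by_cases hnS : n ∈ S0
      · exact Or.inr hnS
      · left
        by_contra hnB
        have hnA : n ∈ A0 := by
          rcases (hunion0 ▸ (Set.mem_union n A0 B0)) with _
          have : n ∈ A0 ∪ B0 := hunion0.symm ▸ (hnS : n ∈ (S0ᶜ : Set V))
          exact this.resolve_right hnB
        exact hnoedge n hnA b hb hn.symm
    · exact fun h => (G.ne_of_adj hn) (Set.mem_singleton_iff.mp h).symm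
  -- sizes
  have size_ge : ∀ (X : Set V) (a : V), a ∈ X → Disjoint X S0 →
      G.neighborSet a ⊆ (X ∪ S0) \ {a} → 3 ≤ X.ncard := by
    intro X a haX hdXS hsub
    have h1 : (G.neighborSet a).ncard ≤ ((X ∪ S0) \ {a}).ncard :=
      Set.ncard_le_ncard hsub
    have h2 : ((X ∪ S0) \ {a}).ncard = (X ∪ S0).ncard - 1 :=
      Set.ncard_diff_singleton_of_mem (Or.inl haX)
    have h3 : (X ∪ S0).ncard = X.ncard + S0.ncard := Set.ncard_union_eq hdXS
    have h4 := hdeg a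
    omega
  have hdAS : Disjoint A0 S0 := by
    rw [Set.disjoint_left]
    intro z hz
    exact hA0sub hz
  have hdBS : Disjoint B0 S0 := by
    rw [Set.disjoint_left]
    intro z hz
    exact hB0sub hz
  have hA0ge : 3 ≤ A0.ncard := size_ge A0 x hxA hdAS (hNA x hxA)
  have hB0ge : 3 ≤ B0.ncard := size_ge B0 y hyB hdBS (hNB y hyB)
  have hsum0 : A0.ncard + B0.ncard + S0.ncard = Fintype.card V := by
    have := Set.ncard_union_eq hdisj0 (Set.toFinite A0) (Set.toFinite B0)
    rw [hunion0] at this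
    omega
  -- main bridging lemma applied to the size-3 side
  have bridge : ∀ (X Y : Set V), X.ncard = 3 → Y.ncard ≤ 4 → X ∪ Y = S0ᶜ →
      Disjoint X Y →
      (∀ a ∈ X, ∀ b ∈ Y, ¬ G.Adj a b) →
      (∀ a ∈ X, G.neighborSet a ⊆ (X ∪ S0) \ {a}) →
      (∀ b ∈ Y, G.neighborSet b ⊆ (Y ∪ S0) \ {b}) →
      ∃ v ∈ T, HasRootedK4MinorAvoiding G (↑T \ {v}) v := by
    intro X Y hX3 hY4 hXY hdXY hnoE hNX hNY
    have hXsub : X ⊆ S0ᶜ := hXY ▸ Set.subset_union_left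
    have hYsub : Y ⊆ S0ᶜ := hXY ▸ Set.subset_union_right
    have hdXS : Disjoint X S0 := by
      rw [Set.disjoint_left]; intro z hz; exact hXsub hz
    have hdYS : Disjoint Y S0 := by
      rw [Set.disjoint_left]; intro z hz; exact hYsub hz
    have hfX := Set.toFinite X
    have hfY := Set.toFinite Y
    have hfS := Set.toFinite S0
    apply main_con G hfS.toFinset hfX.toFinset hfY.toFinset
    · rw [← Set.ncard_eq_toFinset_card]; exact hS0card
    · rw [← Set.ncard_eq_toFinset_card]; exact hX3
    · rw [← Set.ncard_eq_toFinset_card]; exact hY4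
    · intro z
      simp only [Set.Finite.mem_toFinset]
      by_cases hz : z ∈ S0
      · exact Or.inr (Or.inl hz)
      · have : z ∈ X ∪ Y := hXY.symm ▸ (hz : z ∈ (S0ᶜ : Set V))
        rcases this with h | h
        · exact Or.inl h
        · exact Or.inr (Or.inr h)
    · intro z hz1 hz2
      simp only [Set.Finite.mem_toFinset] at hz1 hz2
      exact (Set.disjoint_left.mp hdXS) hz1 hz2
    · intro z hz1 hz2
      simp only [Set.Finite.mem_toFinset] at hz1 hz2
      exact (Set.disjoint_left.mp hdYS) hz1 hz2
    · intro z hz1 hz2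
      simp only [Set.Finite.mem_toFinset] at hz1 hz2
      exact (Set.disjoint_left.mp hdXY) hz1 hz2
    · -- hF1
      intro a ha z hz hza
      simp only [Set.Finite.mem_toFinset] at ha hz
      have hsub := hNX a ha
      have heqN : G.neighborSet a = (X ∪ S0) \ {a} := by
        apply Set.eq_of_subset_of_ncard_le hsub
        have h1 : ((X ∪ S0) \ {a}).ncard = (X ∪ S0).ncard - 1 :=
          Set.ncard_diff_singleton_of_mem (Or.inl ha)
        have h2 : (X ∪ S0).ncard = X.ncard + S0.ncard := Set.ncard_union_eq hdXS
        have h3 := hdeg a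
        omega
      have : z ∈ G.neighborSet a := by
        rw [heqN]
        exact ⟨by rcases hz with h | h; exacts [Or.inl h, Or.inr h], hza⟩
      rwa [SimpleGraph.mem_neighborSet] at this
    · -- hF2
      intro b hb z w hz hw hzb hwb hzw hnz hnw
      simp only [Set.Finite.mem_toFinset] at hb hz hw
      have hzYS : z ∈ Y ∪ S0 := by rcases hz with h | h; exacts [Or.inl h, Or.inr h]
      have hwYS : w ∈ Y ∪ S0 := by rcases hw with h | h; exacts [Or.inl h, Or.inr h]
      have hsub : G.neighborSet b ⊆ (((Y ∪ S0) \ {b}) \ {z}) \ {w} := by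
        intro n hn
        have h1 := hNY b hb hn
        refine ⟨⟨h1, ?_⟩, ?_⟩
        · intro hc
          rw [Set.mem_singleton_iff] at hc
          subst hc
          exact hnz hn
        · intro hc
          rw [Set.mem_singleton_iff] at hc
          subst hc
          exact hnw hn
      have c0 : (Y ∪ S0).ncard ≤ 8 := by
        have := Set.ncard_union_le Y S0
        omega
      have c1 : ((Y ∪ S0) \ {b}).ncard = (Y ∪ S0).ncard - 1 :=
        Set.ncard_diff_singleton_of_mem (Or.inl hb)
      have c2 : (((Y ∪ S0) \ {b}) \ {z}).ncard = ((Y ∪ S0) \ {b}).ncard - 1 :=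
        Set.ncard_diff_singleton_of_mem ⟨hzYS, by simpa using hzb⟩
      have c3 : ((((Y ∪ S0) \ {b}) \ {z}) \ {w}).ncard
          = (((Y ∪ S0) \ {b}) \ {z}).ncard - 1 :=
        Set.ncard_diff_singleton_of_mem ⟨⟨hwYS, by simpa using hwb⟩, by simpa using hzw.symm⟩
      have c4 := Set.ncard_le_ncard hsub (Set.toFinite _)
      have c5 := hdeg b
      have c6 : b ∈ Y ∪ S0 := Or.inl hb
      have c7 : 1 ≤ (Y ∪ S0).ncard := by
        have : ({b} : Set V).ncard ≤ (Y ∪ S0).ncard :=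
          Set.ncard_le_ncard (by simpa using c6)
        simpa using this
      omega
    · exact hT
  -- apply bridge to the size-3 side
  have hcases : A0.ncard = 3 ∨ B0.ncard = 3 := by omega
  rcases hcases with h3 | h3
  · exact bridge A0 B0 h3 (by omega) hunion0 hdisj0 hnoedge hNA hNB
  · refine bridge B0 A0 h3 (by omega) ?_ hdisj0.symm
      (fun b hb a ha hadj => hnoedge a ha b hb hadj.symm) hNB hNA
    rw [Set.union_comm]
    exact hunion0
end

section
/- Let G = K_{3,3,3} (the complete 3-partite graph with parts of size 3), and let e_1, e_2, e_3 be three distinct non-edges of G such that e_1 and e_2 share a common endpoint. Then the graph G + {e_1, e_2, e_3} contains K_8 minus two edges as a minor. -/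
open SimpleGraph

/-- The complete 3-partite graph `K_{3,3,3}`. -/
abbrev K333 : SimpleGraph (Σ _ : Fin 3, Fin 3) :=
  SimpleGraph.completeMultipartiteGraph fun _ => Fin 3


section K333Aux

abbrev V3 := Σ _ : Fin 3, Fin 3

lemma singleton_induce_connected' {V : Type} (G : SimpleGraph V) (v : V) :
    (G.induce {v}).Connected := by
  rw [SimpleGraph.connected_iff]
  refine ⟨fun a b => ?_, ⟨⟨v, rfl⟩⟩⟩
  have : a = b := Subtype.ext (by rw [a.2, b.2])
  exact this ▸ SimpleGraph.Reachable.refl _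

lemma pair_induce_connected' {V : Type} (G : SimpleGraph V) {w p : V}
    (h : G.Adj w p) : (G.induce {w, p}).Connected := by
  rw [SimpleGraph.connected_iff]
  refine ⟨fun a b => ?_, ⟨⟨w, Or.inl rfl⟩⟩⟩
  have key : ∀ c : ({w, p} : Set V), c = ⟨w, Or.inl rfl⟩ ∨ c = ⟨p, Or.inr rfl⟩ := by
    rintro ⟨c, hc | hc⟩
    · exact Or.inl (Subtype.ext hc)
    · exact Or.inr (Subtype.ext hc)
  have hadj : (G.induce {w, p}).Adj ⟨w, Or.inl rfl⟩ ⟨p, Or.inr rfl⟩ := by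
    simp [h]
  rcases key a with rfl | rfl <;> rcases key b with rfl | rfl
  · exact SimpleGraph.Reachable.refl _
  · exact hadj.reachable
  · exact hadj.symm.reachable
  · exact SimpleGraph.Reachable.refl _

lemma adj_of_sym2_eq {V : Type} {G : SimpleGraph V} {c d u v : V}
    (h : s(u, v) = s(c, d)) (hcd : G.Adj c d) : G.Adj u v := by
  rw [Sym2.eq_iff] at h
  rcases h with ⟨rfl, rfl⟩ | ⟨rfl, rfl⟩
  exacts [hcd, hcd.symm]

/-- Key contraction lemma: given an enumeration of 8 branch sets (seven singletons and one
pair `{σ 0, p}` crossing two parts), `G` has a `K₈` minus two edges minor. -/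
lemma key_contract_lemma {G : SimpleGraph V3} (hle : K333 ≤ G)
    (σ : Fin 8 → V3) (p : V3)
    (hinj : Function.Injective σ) (hp : ∀ i, σ i ≠ p)
    (hcross : (σ 0).1 ≠ p.1)
    (f₁ f₂ : Sym2 (Fin 8)) (hff : f₁ ≠ f₂) (hd1 : ¬ f₁.IsDiag) (hd2 : ¬ f₂.IsDiag)
    (hadj : ∀ a b : Fin 8, a ≠ 0 → b ≠ 0 → a ≠ b →
      s(a, b) ≠ f₁ → s(a, b) ≠ f₂ → (σ a).1 = (σ b).1 → G.Adj (σ a) (σ b)) :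
    HasKEqMinor 8 G := by
  have hGadj : ∀ u v : V3, u.1 ≠ v.1 → G.Adj u v := fun u v h =>
    hle (by simpa using h)
  refine ⟨f₁, f₂, hff, hd1, hd2, fun i => if i = 0 then {σ 0, p} else {σ i}, ?_, ?_, ?_, ?_⟩
  · intro i
    beta_reduce
    rcases eq_or_ne i 0 with rfl | h
    · simp
    · simp [h]
  · intro i
    beta_reduce
    rcases eq_or_ne i 0 with rfl | h
    · rw [if_pos rfl]
      exact pair_induce_connected' G (hGadj _ _ hcross)
    · rw [if_neg h]
      exact singleton_induce_connected' G (σ i)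
  · intro i j hij
    have hσ : σ i ≠ σ j := fun h => hij (hinj h)
    beta_reduce
    rw [Set.disjoint_left]
    rcases eq_or_ne i 0 with rfl | hi <;> rcases eq_or_ne j 0 with rfl | hj
    · exact absurd rfl hij
    · rw [if_pos rfl, if_neg hj]
      rintro x (rfl | rfl)
      · simpa using hσ
      · simpa using (hp j).symm
    · rw [if_neg hi, if_pos rfl]
      rintro x rfl
      simp only [Set.mem_insert_iff, Set.mem_singleton_iff]
      push_neg
      exact ⟨hσ, hp i⟩
    · rw [if_neg hi, if_neg hj]
      rintro x rfl
      simpa using hσ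
  · intro i j hij
    rw [SimpleGraph.deleteEdges_adj] at hij
    obtain ⟨hij', hf⟩ := hij
    simp only [Set.mem_insert_iff, Set.mem_singleton_iff, not_or] at hf
    have hij'' : i ≠ j := hij'.ne
    have hmem : ∀ k : Fin 8, σ k ∈ (if k = 0 then ({σ 0, p} : Set _) else {σ k}) := by
      intro k
      rcases eq_or_ne k 0 with rfl | h
      · simp
      · simp [h]
    beta_reduce
    rcases eq_or_ne i 0 with rfl | hi
    · have hj0 : j ≠ 0 := fun h => hij'' (h ▸ rfl)
      rcases eq_or_ne (σ j).1 (σ 0).1 with he | he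
      · refine ⟨p, by simp, σ j, hmem j, (hGadj _ _ (by rw [he]; exact fun h => hcross h)).symm⟩
      · exact ⟨σ 0, by simp, σ j, hmem j, hGadj _ _ fun h => he h.symm⟩
    · rcases eq_or_ne j 0 with rfl | hj
      · rcases eq_or_ne (σ i).1 (σ 0).1 with he | he
        · exact ⟨σ i, hmem i, p, by simp, hGadj _ _ (he ▸ hcross)⟩
        · exact ⟨σ i, hmem i, σ 0, by simp, hGadj _ _ he⟩
      · refine ⟨σ i, hmem i, σ j, hmem j, ?_⟩
        rcases eq_or_ne (σ i).1 (σ j).1 with he | he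
        · exact hadj i j hi hj hij'' hf.1 hf.2 he
        · exact hGadj _ _ he

/-- Branch-set enumeration for the case where all three added edges lie in part `i`. -/
def σA (i x2 a2 b2 : Fin 3) : Fin 8 → V3 :=
  ![⟨i+1,0⟩, ⟨i,x2⟩, ⟨i,a2⟩, ⟨i,b2⟩, ⟨i+1,1⟩, ⟨i+1,2⟩, ⟨i+2,1⟩, ⟨i+2,2⟩]

/-- Branch-set enumeration for the case where `e₃` lies in a part `j ≠ i`. -/
def σC (i j x2 a2 b2 u2 v2 : Fin 3) : Fin 8 → V3 :=
  ![⟨j,-(u2+v2)⟩, ⟨i,x2⟩, ⟨i,a2⟩, ⟨i,b2⟩, ⟨j,u2⟩, ⟨j,v2⟩, ⟨-(i+j),1⟩, ⟨-(i+j),2⟩]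

set_option maxHeartbeats 4000000 in
set_option synthInstance.maxHeartbeats 2000000 in
set_option synthInstance.maxSize 2048 in
theorem tA1 : ∀ i x2 a2 b2 : Fin 3, x2 ≠ a2 → x2 ≠ b2 → a2 ≠ b2 →
    Function.Injective (σA i x2 a2 b2) ∧
    (∀ k, σA i x2 a2 b2 k ≠ ⟨i+2,0⟩) ∧
    (σA i x2 a2 b2 0).1 ≠ i + 2 := by decide

set_option maxHeartbeats 4000000 in
set_option synthInstance.maxHeartbeats 2000000 in
set_option synthInstance.maxSize 2048 in
theorem tA2 : ∀ i x2 a2 b2 : Fin 3,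
    ∀ α β : Fin 8, α ≠ 0 → β ≠ 0 → α ≠ β → s(α,β) ≠ s(4,5) → s(α,β) ≠ s(6,7) →
      (σA i x2 a2 b2 α).1 = (σA i x2 a2 b2 β).1 →
      s(σA i x2 a2 b2 α, σA i x2 a2 b2 β) = s((⟨i,x2⟩:V3),(⟨i,a2⟩:V3)) ∨
      s(σA i x2 a2 b2 α, σA i x2 a2 b2 β) = s((⟨i,x2⟩:V3),(⟨i,b2⟩:V3)) ∨
      s(σA i x2 a2 b2 α, σA i x2 a2 b2 β) = s((⟨i,a2⟩:V3),(⟨i,b2⟩:V3)) := by decide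

set_option maxHeartbeats 4000000 in
set_option synthInstance.maxHeartbeats 2000000 in
set_option synthInstance.maxSize 2048 in
theorem tA3 : ∀ i x2 a2 b2 u2 v2 : Fin 3, x2 ≠ a2 → x2 ≠ b2 → a2 ≠ b2 → u2 ≠ v2 →
    s((⟨i,u2⟩:V3),(⟨i,v2⟩:V3)) ≠ s((⟨i,x2⟩:V3),(⟨i,a2⟩:V3)) →
    s((⟨i,u2⟩:V3),(⟨i,v2⟩:V3)) ≠ s((⟨i,x2⟩:V3),(⟨i,b2⟩:V3)) →
    s((⟨i,u2⟩:V3),(⟨i,v2⟩:V3)) = s((⟨i,a2⟩:V3),(⟨i,b2⟩:V3)) := by decide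

set_option maxHeartbeats 4000000 in
set_option synthInstance.maxHeartbeats 2000000 in
set_option synthInstance.maxSize 2048 in
theorem tC1 : ∀ i j x2 a2 b2 u2 v2 : Fin 3, j ≠ i → x2 ≠ a2 → x2 ≠ b2 → a2 ≠ b2 → u2 ≠ v2 →
    Function.Injective (σC i j x2 a2 b2 u2 v2) ∧
    (∀ k, σC i j x2 a2 b2 u2 v2 k ≠ ⟨-(i+j),0⟩) ∧
    (σC i j x2 a2 b2 u2 v2 0).1 ≠ -(i+j) := by decide

set_option maxHeartbeats 4000000 in
set_option synthInstance.maxHeartbeats 2000000 in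
set_option synthInstance.maxSize 2048 in
theorem tC2 : ∀ i j x2 a2 b2 u2 v2 : Fin 3, j ≠ i → x2 ≠ a2 → x2 ≠ b2 → a2 ≠ b2 → u2 ≠ v2 →
    ∀ α β : Fin 8, α ≠ 0 → β ≠ 0 → α ≠ β → s(α,β) ≠ s(2,3) → s(α,β) ≠ s(6,7) →
      (σC i j x2 a2 b2 u2 v2 α).1 = (σC i j x2 a2 b2 u2 v2 β).1 →
      s(σC i j x2 a2 b2 u2 v2 α, σC i j x2 a2 b2 u2 v2 β) = s((⟨i,x2⟩:V3),(⟨i,a2⟩:V3)) ∨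
      s(σC i j x2 a2 b2 u2 v2 α, σC i j x2 a2 b2 u2 v2 β) = s((⟨i,x2⟩:V3),(⟨i,b2⟩:V3)) ∨
      s(σC i j x2 a2 b2 u2 v2 α, σC i j x2 a2 b2 u2 v2 β) = s((⟨j,u2⟩:V3),(⟨j,v2⟩:V3)) := by
  decide

theorem mkne : ∀ (c s t : Fin 3), s ≠ t → (⟨c,s⟩:V3) ≠ ⟨c,t⟩ := by decide

end K333Aux

theorem K333_add_three_edges (e₁ e₂ e₃ : Sym2 (Σ _ : Fin 3, Fin 3))
    (h12 : e₁ ≠ e₂) (h13 : e₁ ≠ e₃) (h23 : e₂ ≠ e₃)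
    (hne : ∀ e ∈ ({e₁, e₂, e₃} : Set (Sym2 (Σ _ : Fin 3, Fin 3))),
      ¬ e.IsDiag ∧ e ∉ K333.edgeSet)
    (hshare : ∃ x, x ∈ e₁ ∧ x ∈ e₂) :
    HasKEqMinor 8 (K333 ⊔ SimpleGraph.fromEdgeSet {e₁, e₂, e₃}) := by
  obtain ⟨x, hx1, hx2⟩ := hshare
  obtain ⟨a, rfl⟩ := Sym2.mem_iff_exists.1 hx1
  obtain ⟨b, rfl⟩ := Sym2.mem_iff_exists.1 hx2
  -- facts about e₃
  revert h13 h23 hne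
  induction e₃ using Sym2.inductionOn with
  | hf u v =>
  intro h13 h23 hne
  have hne1 := hne _ (Set.mem_insert _ _)
  have hne2 := hne _ (Set.mem_insert_of_mem _ (Set.mem_insert _ _))
  have hne3 := hne _ (Set.mem_insert_of_mem _ (Set.mem_insert_of_mem _ rfl))
  have hxa : x ≠ a := fun h => hne1.1 (Sym2.mk_isDiag_iff.2 h)
  have hxb : x ≠ b := fun h => hne2.1 (Sym2.mk_isDiag_iff.2 h)
  have huv : u ≠ v := fun h => hne3.1 (Sym2.mk_isDiag_iff.2 h)
  have hab : a ≠ b := fun h => h12 (by rw [h])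
  have hfxa : x.1 = a.1 := by
    by_contra h
    exact hne1.2 ((SimpleGraph.mem_edgeSet _).2 (by simpa [SimpleGraph.completeMultipartiteGraph] using h))
  have hfxb : x.1 = b.1 := by
    by_contra h
    exact hne2.2 ((SimpleGraph.mem_edgeSet _).2 (by simpa [SimpleGraph.completeMultipartiteGraph] using h))
  have hfuv : u.1 = v.1 := by
    by_contra h
    exact hne3.2 ((SimpleGraph.mem_edgeSet _).2 (by simpa [SimpleGraph.completeMultipartiteGraph] using h))
  obtain ⟨i, x2⟩ := x
  obtain ⟨ia, a2⟩ := a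
  obtain rfl : i = ia := hfxa
  obtain ⟨ib, b2⟩ := b
  obtain rfl : i = ib := hfxb
  obtain ⟨j, u2⟩ := u
  obtain ⟨jv, v2⟩ := v
  obtain rfl : j = jv := hfuv
  have hx2a2 : x2 ≠ a2 := fun h => hxa (by rw [h])
  have hx2b2 : x2 ≠ b2 := fun h => hxb (by rw [h])
  have ha2b2 : a2 ≠ b2 := fun h => hab (by rw [h])
  have hu2v2 : u2 ≠ v2 := fun h => huv (by rw [h])
  set S : Set (Sym2 V3) :=
    {s((⟨i,x2⟩:V3), (⟨i,a2⟩:V3)), s((⟨i,x2⟩:V3), (⟨i,b2⟩:V3)), s((⟨j,u2⟩:V3), (⟨j,v2⟩:V3))}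
    with hS
  have hA1 : (K333 ⊔ SimpleGraph.fromEdgeSet S).Adj ⟨i,x2⟩ ⟨i,a2⟩ :=
    (SimpleGraph.sup_adj _ _ _ _).2 (Or.inr ((SimpleGraph.fromEdgeSet_adj _).2
      ⟨Set.mem_insert _ _, mkne _ _ _ hx2a2⟩))
  have hA2 : (K333 ⊔ SimpleGraph.fromEdgeSet S).Adj ⟨i,x2⟩ ⟨i,b2⟩ :=
    (SimpleGraph.sup_adj _ _ _ _).2 (Or.inr ((SimpleGraph.fromEdgeSet_adj _).2
      ⟨Set.mem_insert_of_mem _ (Set.mem_insert _ _), mkne _ _ _ hx2b2⟩))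
  have hA3 : (K333 ⊔ SimpleGraph.fromEdgeSet S).Adj ⟨j,u2⟩ ⟨j,v2⟩ :=
    (SimpleGraph.sup_adj _ _ _ _).2 (Or.inr ((SimpleGraph.fromEdgeSet_adj _).2
      ⟨Set.mem_insert_of_mem _ (Set.mem_insert_of_mem _ rfl), mkne _ _ _ hu2v2⟩))
  rcases eq_or_ne j i with rfl | hji
  · -- Case A : e₃ is in the same part as e₁, e₂
    have he3 : s((⟨j,u2⟩:V3),(⟨j,v2⟩:V3)) = s((⟨j,a2⟩:V3),(⟨j,b2⟩:V3)) :=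
      tA3 j x2 a2 b2 u2 v2 hx2a2 hx2b2 ha2b2 hu2v2 (Ne.symm h13) (Ne.symm h23)
    have hAab : (K333 ⊔ SimpleGraph.fromEdgeSet S).Adj ⟨j,a2⟩ ⟨j,b2⟩ :=
      adj_of_sym2_eq he3.symm hA3
    obtain ⟨hinj, hp, hcross⟩ := tA1 j x2 a2 b2 hx2a2 hx2b2 ha2b2
    refine key_contract_lemma le_sup_left (σA j x2 a2 b2) ⟨j+2,0⟩ hinj hp hcross
      s(4,5) s(6,7) (by decide) (by decide) (by decide) ?_
    intro α β h1 h2 h3 h4 h5 h6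
    rcases tA2 j x2 a2 b2 α β h1 h2 h3 h4 h5 h6 with h | h | h
    exacts [adj_of_sym2_eq h hA1, adj_of_sym2_eq h hA2, adj_of_sym2_eq h hAab]
  · -- Case C : e₃ is in a different part
    obtain ⟨hinj, hp, hcross⟩ := tC1 i j x2 a2 b2 u2 v2 hji hx2a2 hx2b2 ha2b2 hu2v2
    refine key_contract_lemma le_sup_left (σC i j x2 a2 b2 u2 v2) ⟨-(i+j),0⟩ hinj hp hcross
      s(2,3) s(6,7) (by decide) (by decide) (by decide) ?_
    intro α β h1 h2 h3 h4 h5 h6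
    rcases tC2 i j x2 a2 b2 u2 v2 hji hx2a2 hx2b2 ha2b2 hu2v2 α β h1 h2 h3 h4 h5 h6 with h | h | h
    exacts [adj_of_sym2_eq h hA1, adj_of_sym2_eq h hA2, adj_of_sym2_eq h hA3]
end

section
/- If G is a minimal counterexample to the statement 'every graph with n ≥ 8 vertices and at least 6n - 20 edges either contains a K_9^= minor or is a (K_8, K_{2,2,2,2,2}, 5)-cockade' (minimal with respect to number of vertices, and with exactly 6n - 20 edges), then the minimum degree of G is at least 7. -/
open SimpleGraph

section Infrastructure

open Function Set

variable {V V' W U : Type}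

lemma sym2_forall_mem {x y : V} {p : V → Prop} :
    (∀ v ∈ s(x, y), p v) ↔ p x ∧ p y := by
  constructor
  · intro h; exact ⟨h x (by simp), h y (by simp)⟩
  · rintro ⟨hx, hy⟩ v hv
    rcases Sym2.mem_iff.mp hv with rfl | rfl <;> assumption

/-- Pushing a connected induced set through an adjacency-preserving map. -/
lemma connected_image {G : SimpleGraph V} {G' : SimpleGraph V'} (f : V → V')
    (hf : ∀ a b, G.Adj a b → G'.Adj (f a) (f b)) {D : Set V}
    (h : (G.induce D).Connected) : (G'.induce (f '' D)).Connected := by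
  refine h.map ⟨fun x => ⟨f x.1, ⟨x.1, x.2, rfl⟩⟩, fun {a b} hab => by exact hf a.1 b.1 hab⟩ ?_
  rintro ⟨y, x, hx, rfl⟩
  exact ⟨⟨x, hx⟩, Subtype.ext rfl⟩

lemma reachable_induce_mono {G : SimpleGraph V} {D E : Set V} (hDE : D ⊆ E)
    {a b : ↥D} (h : (G.induce D).Reachable a b) :
    (G.induce E).Reachable ⟨a.1, hDE a.2⟩ ⟨b.1, hDE b.2⟩ :=
  Reachable.map (⟨fun x => ⟨x.1, hDE x.2⟩, fun {_ _} hab => hab⟩ :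
    G.induce D →g G.induce E) h

lemma connected_induce_singleton (G : SimpleGraph V) (a : V) :
    (G.induce {a}).Connected := by
  rw [SimpleGraph.connected_iff_exists_forall_reachable]
  refine ⟨⟨a, rfl⟩, fun w => ?_⟩
  have : (⟨a, rfl⟩ : ↥({a} : Set V)) = w := Subtype.ext w.2.symm
  exact this ▸ Reachable.refl _

lemma connected_induce_insert {G : SimpleGraph V} {D : Set V} (a : V)
    (hD : (G.induce D).Connected) (d₀ : V) (hd₀ : d₀ ∈ D) (had : G.Adj a d₀) :
    (G.induce (insert a D)).Connected := by
  have hsub : D ⊆ insert a D := subset_insert a D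
  rw [SimpleGraph.connected_iff_exists_forall_reachable]
  refine ⟨⟨a, mem_insert a D⟩, ?_⟩
  rintro ⟨x, hx⟩
  rcases hx with rfl | hx
  · exact Reachable.refl _
  · have h1 : (G.induce D).Reachable ⟨d₀, hd₀⟩ ⟨x, hx⟩ := hD.preconnected _ _
    have h2 := reachable_induce_mono hsub h1
    exact Reachable.trans (SimpleGraph.Adj.reachable (by exact had)) h2

/-- connectivity of a union of branch sets over a connected pattern -/
lemma connected_biUnion {G : SimpleGraph V} {ι : Type} {P : SimpleGraph ι} {s : Set ι}
    (hs : (P.induce s).Connected) {B : ι → Set V}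
    (hne : ∀ i ∈ s, (B i).Nonempty)
    (hconn : ∀ i ∈ s, (G.induce (B i)).Connected)
    (hadj : ∀ i ∈ s, ∀ j ∈ s, P.Adj i j → ∃ a ∈ B i, ∃ b ∈ B j, G.Adj a b) :
    (G.induce (⋃ i ∈ s, B i)).Connected := by
  set Un := ⋃ i ∈ s, B i with hUn
  have hBU : ∀ i (hi : i ∈ s), B i ⊆ Un := fun i hi => subset_biUnion_of_mem hi
  have aux : ∀ (i j : ↥s) (p : (P.induce s).Walk i j),
      ∀ a (ha : a ∈ B i.1) b (hb : b ∈ B j.1),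
        (G.induce Un).Reachable ⟨a, hBU _ i.2 ha⟩ ⟨b, hBU _ j.2 hb⟩ := by
    intro i j p
    induction p with
    | nil =>
      intro a ha b hb
      have h1 : (G.induce (B _)).Reachable ⟨a, ha⟩ ⟨b, hb⟩ :=
        (hconn _ (Subtype.prop _)).preconnected _ _
      exact reachable_induce_mono (hBU _ (Subtype.prop _)) h1
    | @cons i k j hik p ih =>
      intro a ha b hb
      obtain ⟨a', ha', b', hb', hab⟩ := hadj i.1 i.2 k.1 k.2 hik
      have h1 : (G.induce (B i.1)).Reachable ⟨a, ha⟩ ⟨a', ha'⟩ :=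
        (hconn _ i.2).preconnected _ _
      have h2 := reachable_induce_mono (hBU _ i.2) h1
      refine h2.trans (Reachable.trans ?_ (ih b' hb' b hb))
      exact SimpleGraph.Adj.reachable (by exact hab)
  have hsne : Nonempty ↥s := hs.nonempty
  obtain ⟨i⟩ := hsne
  obtain ⟨a, ha⟩ := hne i.1 i.2
  rw [SimpleGraph.connected_iff_exists_forall_reachable]
  refine ⟨⟨a, hBU _ i.2 ha⟩, ?_⟩
  rintro ⟨y, hy⟩
  obtain ⟨_, ⟨j, rfl⟩, hy'⟩ := hy
  obtain ⟨_, ⟨hj, rfl⟩, hy'⟩ := hy'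
  obtain ⟨p⟩ := hs.preconnected i ⟨j, hj⟩
  exact aux i ⟨j, hj⟩ p a ha y hy'

end Infrastructure
section MinorLemmas

open Function Set

variable {V V' W U : Type}

lemma IsMinorOf.map_through {H : SimpleGraph W} {G : SimpleGraph V} {G' : SimpleGraph V'}
    (hm : IsMinorOf H G) (f : V → V') (hinj : Function.Injective f)
    (hf : ∀ a b, G.Adj a b → G'.Adj (f a) (f b)) : IsMinorOf H G' := by
  obtain ⟨B, h1, h2, h3, h4⟩ := hm
  refine ⟨fun w => f '' B w, fun w => (h1 w).image f,
    fun w => connected_image f hf (h2 w), ?_, ?_⟩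
  · intro w₁ w₂ hne
    exact Set.disjoint_image_of_injective hinj (h3 hne)
  · intro w₁ w₂ hadj
    obtain ⟨u, hu, v, hv, huv⟩ := h4 w₁ w₂ hadj
    exact ⟨f u, ⟨u, hu, rfl⟩, f v, ⟨v, hv, rfl⟩, hf u v huv⟩

lemma IsMinorOf.trans {F : SimpleGraph U} {H : SimpleGraph W} {G : SimpleGraph V}
    (h1 : IsMinorOf F H) (h2 : IsMinorOf H G) : IsMinorOf F G := by
  obtain ⟨B1, hne1, hc1, hd1, ha1⟩ := h1
  obtain ⟨B2, hne2, hc2, hd2, ha2⟩ := h2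
  refine ⟨fun u => ⋃ w ∈ B1 u, B2 w, ?_, ?_, ?_, ?_⟩
  · intro u
    obtain ⟨w, hw⟩ := hne1 u
    obtain ⟨v, hv⟩ := hne2 w
    exact ⟨v, Set.mem_biUnion hw hv⟩
  · intro u
    exact connected_biUnion (hc1 u) (fun w _ => hne2 w) (fun w _ => hc2 w)
      (fun w _ w' _ hadj => ha2 w w' hadj)
  · intro u₁ u₂ hne
    rw [Set.disjoint_left]
    rintro v hv1 hv2
    obtain ⟨_, ⟨w, rfl⟩, _, ⟨hw, rfl⟩, hv1⟩ := hv1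
    obtain ⟨_, ⟨w', rfl⟩, _, ⟨hw', rfl⟩, hv2⟩ := hv2
    have hww' : w ≠ w' := by
      rintro rfl
      exact Set.disjoint_left.mp (hd1 hne) hw hw'
    exact Set.disjoint_left.mp (hd2 hww') hv1 hv2
  · intro u₁ u₂ hadj
    obtain ⟨w₁, hw₁, w₂, hw₂, hww⟩ := ha1 u₁ u₂ hadj
    obtain ⟨v₁, hv₁, v₂, hv₂, hvv⟩ := ha2 w₁ w₂ hww
    exact ⟨v₁, Set.mem_biUnion hw₁ hv₁, v₂, Set.mem_biUnion hw₂ hv₂, hvv⟩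

lemma HasKEqMinor.map_through {t : ℕ} {G : SimpleGraph V} {G' : SimpleGraph V'}
    (hm : HasKEqMinor t G) (f : V → V') (hinj : Function.Injective f)
    (hf : ∀ a b, G.Adj a b → G'.Adj (f a) (f b)) : HasKEqMinor t G' := by
  obtain ⟨e₁, e₂, hne, hd1, hd2, hmin⟩ := hm
  exact ⟨e₁, e₂, hne, hd1, hd2, hmin.map_through f hinj hf⟩

lemma HasKEqMinor.of_isMinorOf {t : ℕ} {G : SimpleGraph V} {G' : SimpleGraph V'}
    (hm : HasKEqMinor t G) (h : IsMinorOf G G') : HasKEqMinor t G' := by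
  obtain ⟨e₁, e₂, hne, hd1, hd2, hmin⟩ := hm
  exact ⟨e₁, e₂, hne, hd1, hd2, hmin.trans h⟩

/-- singleton-branch-set minors -/
lemma isMinorOf_of_injective {H : SimpleGraph W} {G : SimpleGraph V} (f : W → V)
    (hinj : Function.Injective f) (hf : ∀ a b, H.Adj a b → G.Adj (f a) (f b)) :
    IsMinorOf H G := by
  refine ⟨fun w => {f w}, fun w => ⟨f w, rfl⟩, fun w => connected_induce_singleton G (f w),
    ?_, ?_⟩
  · intro w₁ w₂ hne
    simp only [Set.disjoint_singleton_left, Set.mem_singleton_iff]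
    exact fun h => hne (hinj h)
  · intro w₁ w₂ hadj
    exact ⟨f w₁, rfl, f w₂, rfl, hf _ _ hadj⟩

lemma reachable_induce_of_support {G : SimpleGraph V} {S R : Set V} {a b : ↥S}
    (p : (G.induce S).Walk a b) (h : ∀ v ∈ p.support, (v : V) ∈ R) :
    (G.induce R).Reachable ⟨a.1, h a p.start_mem_support⟩ ⟨b.1, h b p.end_mem_support⟩ := by
  induction p with
  | nil => exact Reachable.refl _
  | @cons x y z hxy q ih =>
    have hy : ∀ v ∈ q.support, (v : V) ∈ R := fun v hv => h v (by simp [hv])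
    refine Reachable.trans ?_ (ih hy)
    exact SimpleGraph.Adj.reachable (by exact hxy)

/-- the "reachable set" gadget -/
lemma exists_reach_set (G : SimpleGraph V) {S : Set V} {u : V} (hu : u ∈ S) :
    ∃ R : Set V, u ∈ R ∧ R ⊆ S ∧ (G.induce R).Connected ∧
      (∀ x ∈ R, ∀ y ∈ S, G.Adj x y → y ∈ R) := by
  classical
  refine ⟨Subtype.val '' {y : ↥S | (G.induce S).Reachable ⟨u, hu⟩ y}, ?_, ?_, ?_, ?_⟩
  · exact ⟨⟨u, hu⟩, Reachable.refl _, rfl⟩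
  · rintro _ ⟨y, _, rfl⟩; exact y.2
  · set R := Subtype.val '' {y : ↥S | (G.induce S).Reachable ⟨u, hu⟩ y} with hR
    have huR : u ∈ R := ⟨⟨u, hu⟩, Reachable.refl _, rfl⟩
    rw [SimpleGraph.connected_iff_exists_forall_reachable]
    refine ⟨⟨u, huR⟩, ?_⟩
    rintro ⟨_, ⟨y, hy, rfl⟩⟩
    obtain ⟨p⟩ := hy
    have hsupp : ∀ v ∈ p.support, (v : V) ∈ R :=
      fun v hv => ⟨v, ⟨p.takeUntil v hv⟩, rfl⟩
    exact reachable_induce_of_support p hsupp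
  · rintro _ ⟨x, hx, rfl⟩ y hy hadj
    exact ⟨⟨y, hy⟩, hx.trans (SimpleGraph.Adj.reachable (by exact hadj)), rfl⟩

end MinorLemmas
section Counting

open Function Set

variable {V V' : Type}

lemma ncard_edgeSet_iso {G : SimpleGraph V} {G' : SimpleGraph V'} (e : G ≃g G') :
    G.edgeSet.ncard = G'.edgeSet.ncard := by
  rw [← Nat.card_coe_set_eq, ← Nat.card_coe_set_eq]
  exact Nat.card_congr e.mapEdgeSet

lemma edgeSet_induce_ncard (G : SimpleGraph V) (S : Set V) :
    (G.induce S).edgeSet.ncard = {e ∈ G.edgeSet | ∀ v ∈ e, v ∈ S}.ncard := by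
  rw [← Set.ncard_image_of_injective (G.induce S).edgeSet
    (Sym2.map.injective Subtype.val_injective)]
  congr 1
  ext e
  constructor
  · rintro ⟨e', he', rfl⟩
    induction e' using Sym2.ind with
    | _ a b =>
      rw [Sym2.map_pair_eq]
      refine ⟨by rw [SimpleGraph.mem_edgeSet]; exact he', ?_⟩
      rw [sym2_forall_mem]
      exact ⟨a.2, b.2⟩
  · intro he
    induction e using Sym2.ind with
    | _ x y =>
      obtain ⟨hadj, hmem⟩ := he
      rw [sym2_forall_mem] at hmem
      exact ⟨s(⟨x, hmem.1⟩, ⟨y, hmem.2⟩), by exact hadj, Sym2.map_pair_eq _ _ _⟩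

lemma induce_clique_eq_top {G : SimpleGraph V} {C : Set V} (h : G.IsClique C) :
    G.induce C = (⊤ : SimpleGraph ↥C) := by
  ext a b
  simp only [SimpleGraph.comap_adj, SimpleGraph.top_adj]
  constructor
  · intro hadj
    exact fun hab => (hadj.ne (by rw [hab]))
  · intro hne
    exact h a.2 b.2 (fun hv => hne (Subtype.ext hv))

lemma ncard_edges_within_clique {G : SimpleGraph V} {C : Set V} (h : G.IsClique C)
    {n : ℕ} (h5 : C.ncard = n) (hfin : C.Finite) :
    {e ∈ G.edgeSet | ∀ v ∈ e, v ∈ C}.ncard = n.choose 2 := by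
  classical
  rw [← edgeSet_induce_ncard]
  haveI := hfin.fintype
  rw [induce_clique_eq_top h]
  rw [← SimpleGraph.coe_edgeFinset, Set.ncard_coe_finset,
    SimpleGraph.card_edgeFinset_top_eq_card_choose_two]
  congr 1
  rw [← h5, Set.ncard_eq_toFinset_card', Set.toFinset_card]

lemma ncard_edgeSet_delete_vertex [Fintype V] (G : SimpleGraph V) (v : V) :
    (G.induce ({v}ᶜ : Set V)).edgeSet.ncard + (G.neighborSet v).ncard
      = G.edgeSet.ncard := by
  classical
  rw [edgeSet_induce_ncard]
  have h1 : {e ∈ G.edgeSet | ∀ w ∈ e, w ∈ ({v}ᶜ : Set V)} = G.edgeSet \ G.incidenceSet v := by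
    ext e
    simp only [Set.mem_setOf_eq, Set.mem_diff, SimpleGraph.incidenceSet,
      Set.mem_compl_iff, Set.mem_singleton_iff]
    constructor
    · rintro ⟨he, hm⟩
      exact ⟨he, fun hv => hm v hv.2 rfl⟩
    · rintro ⟨he, hv⟩
      exact ⟨he, fun w hw hwv => hv ⟨he, hwv ▸ hw⟩⟩
  have h2 : (G.neighborSet v).ncard = (G.incidenceSet v).ncard := by
    rw [← Nat.card_coe_set_eq, ← Nat.card_coe_set_eq,
      Nat.card_eq_fintype_card, Nat.card_eq_fintype_card,
      SimpleGraph.card_incidenceSet_eq_degree, ← SimpleGraph.card_neighborSet_eq_degree]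
  rw [h1, h2]
  exact Set.ncard_diff_add_ncard_of_subset (G.incidenceSet_subset v) (Set.toFinite _)

lemma edges_top_fin8 : (⊤ : SimpleGraph (Fin 8)).edgeSet.ncard = 28 := by
  rw [← SimpleGraph.coe_edgeFinset, Set.ncard_coe_finset]
  decide

lemma edges_K22222 : K22222.edgeSet.ncard = 40 := by
  rw [← SimpleGraph.coe_edgeFinset, Set.ncard_coe_finset]
  decide

end Counting
section CockadeCount

open Function Set

lemma cockade85_count {V : Type} {H : SimpleGraph V} (hc : Cockade85 H) :
    ∀ (_ : Finite V), 8 ≤ Nat.card V ∧ H.edgeSet.ncard + 20 = 6 * Nat.card V := by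
  induction hc with
  | base₁ G h =>
    intro hfin
    obtain ⟨e⟩ := h
    have hcard := Nat.card_congr e.toEquiv
    simp only [Nat.card_eq_fintype_card, Fintype.card_fin] at hcard
    rw [hcard, ncard_edgeSet_iso e, edges_top_fin8]
    norm_num
  | base₂ G h =>
    intro hfin
    obtain ⟨e⟩ := h
    have hcard := Nat.card_congr e.toEquiv
    have h10 : Nat.card (Σ _ : Fin 5, Fin 2) = 10 := by
      rw [Nat.card_eq_fintype_card]; decide
    rw [h10] at hcard
    rw [hcard, ncard_edgeSet_iso e, edges_K22222]
    omega
  | glue G A B hunion hAB hBA hk hclq hcross hcA hcB ihA ihB =>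
    intro hfin
    haveI := hfin
    obtain ⟨hA8, hAe⟩ := ihA inferInstance
    obtain ⟨hB8, hBe⟩ := ihB inferInstance
    rw [Nat.card_coe_set_eq] at hA8 hAe hB8 hBe
    rw [edgeSet_induce_ncard] at hAe hBe
    set EA := {e ∈ G.edgeSet | ∀ v ∈ e, v ∈ A} with hEA
    set EB := {e ∈ G.edgeSet | ∀ v ∈ e, v ∈ B} with hEB
    have hUE : EA ∪ EB = G.edgeSet := by
      ext e
      induction e using Sym2.ind with
      | _ x y =>
        simp only [hEA, hEB, Set.mem_union, Set.mem_setOf_eq, sym2_forall_mem]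
        constructor
        · rintro (⟨he, _⟩ | ⟨he, _⟩) <;> exact he
        · intro he
          have hx : x ∈ A ∪ B := hunion ▸ Set.mem_univ x
          have hy : y ∈ A ∪ B := hunion ▸ Set.mem_univ y
          have hadj : G.Adj x y := (SimpleGraph.mem_edgeSet G).mp he
          by_cases hxA : x ∈ A <;> by_cases hyA : y ∈ A
          · exact Or.inl ⟨he, hxA, hyA⟩
          · have hyB : y ∈ B := hy.resolve_left hyA
            by_cases hxB : x ∈ B
            · exact Or.inr ⟨he, hxB, hyB⟩
            · exact absurd hadj (hcross x ⟨hxA, hxB⟩ y ⟨hyB, hyA⟩)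
          · have hxB : x ∈ B := hx.resolve_left hxA
            by_cases hyB : y ∈ B
            · exact Or.inr ⟨he, hxB, hyB⟩
            · exact absurd hadj.symm (hcross y ⟨hyA, hyB⟩ x ⟨hxB, hxA⟩)
          · exact Or.inr ⟨he, hx.resolve_left hxA, hy.resolve_left hyA⟩
    have hIE : EA ∩ EB = {e ∈ G.edgeSet | ∀ v ∈ e, v ∈ A ∩ B} := by
      ext e
      simp only [hEA, hEB, Set.mem_inter_iff, Set.mem_setOf_eq]
      constructor
      · rintro ⟨⟨he, ha⟩, ⟨_, hb⟩⟩
        exact ⟨he, fun v hv => ⟨ha v hv, hb v hv⟩⟩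
      · rintro ⟨he, hab⟩
        exact ⟨⟨he, fun v hv => (hab v hv).1⟩, ⟨he, fun v hv => (hab v hv).2⟩⟩
    have hI10 : (EA ∩ EB).ncard = 10 := by
      rw [hIE, ncard_edges_within_clique hclq hk]
      · rfl
      · exact Set.toFinite _
    have hsum := Set.ncard_union_add_ncard_inter EA EB (Set.toFinite _) (Set.toFinite _)
    rw [hUE, hI10] at hsum
    have h := Set.ncard_union_add_ncard_inter A B (Set.toFinite _) (Set.toFinite _)
    rw [hunion, hk, Set.ncard_univ] at h
    exact ⟨by omega, by omega⟩

end CockadeCount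
section Attach

open Function Set

variable {V : Type}

lemma ncard_val_preimage {A C : Set V} (hCA : C ⊆ A) :
    {x : ↥A | x.1 ∈ C}.ncard = C.ncard := by
  rw [← Set.ncard_image_of_injective {x : ↥A | x.1 ∈ C} Subtype.val_injective]
  congr 1
  ext x
  constructor
  · rintro ⟨y, hy, rfl⟩; exact hy
  · intro hx; exact ⟨⟨x, hCA hx⟩, hx, rfl⟩

lemma connected_induce_induce {G : SimpleGraph V} {A R : Set V} (hRA : R ⊆ A)
    (h : (G.induce R).Connected) : ((G.induce A).induce {x : ↥A | x.1 ∈ R}).Connected := by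
  refine h.map ⟨fun x => ⟨⟨x.1, hRA x.2⟩, x.2⟩, fun {a b} hab => by exact hab⟩ ?_
  rintro ⟨⟨x, hxA⟩, hxR⟩
  exact ⟨⟨x, hxR⟩, rfl⟩

lemma set_finite_of_ncard_five {C : Set V} (h : C.ncard = 5) : C.Finite := by
  by_contra hinf
  rw [Set.Infinite.ncard hinf] at h
  omega

/-- The core of the glue case for the attachment lemma, assuming `C ⊆ A`. -/
lemma attach_glue_core (G : SimpleGraph V) (A B : Set V)
    (hunion : A ∪ B = Set.univ)
    (hcross : ∀ u ∈ A \ B, ∀ v ∈ B \ A, ¬ G.Adj u v)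
    (hk : (A ∩ B).ncard = 5) (hclq : G.IsClique (A ∩ B))
    (ihA : ∀ C D : Set ↥A, (G.induce A).IsClique C → C.ncard = 5 → D.Nonempty →
      ((G.induce A).induce D).Connected →
      (∀ d ∈ D, ∀ x, x ∉ C → (G.induce A).Adj d x → x ∈ D) →
      Disjoint C D → ∀ c ∈ C, ∃ d ∈ D, (G.induce A).Adj d c)
    (ihB : ∀ C D : Set ↥B, (G.induce B).IsClique C → C.ncard = 5 → D.Nonempty →
      ((G.induce B).induce D).Connected →
      (∀ d ∈ D, ∀ x, x ∉ C → (G.induce B).Adj d x → x ∈ D) →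
      Disjoint C D → ∀ c ∈ C, ∃ d ∈ D, (G.induce B).Adj d c)
    (C D : Set V) (hC : G.IsClique C) (hC5 : C.ncard = 5) (hCA : C ⊆ A)
    (hDne : D.Nonempty) (hDconn : (G.induce D).Connected)
    (hDcl : ∀ d ∈ D, ∀ x, x ∉ C → G.Adj d x → x ∈ D)
    (hdisj : Disjoint C D) : ∀ c ∈ C, ∃ d ∈ D, G.Adj d c := by
  by_cases hDA : (D ∩ A).Nonempty
  · -- recurse into A using a reach set inside D ∩ A
    obtain ⟨a₀, ha₀D, ha₀A⟩ := hDA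
    obtain ⟨R, haR, hRsub, hRconn, hRcl⟩ :=
      exists_reach_set G (S := D ∩ A) (u := a₀) ⟨ha₀D, ha₀A⟩
    have hRA : R ⊆ A := fun x hx => (hRsub hx).2
    have key := ihA {x : ↥A | x.1 ∈ C} {x : ↥A | x.1 ∈ R}
      (fun a ha b hb hne => by exact hC ha hb (fun h => hne (Subtype.ext h)))
      (by rw [ncard_val_preimage hCA, hC5])
      ⟨⟨a₀, ha₀A⟩, haR⟩
      (connected_induce_induce hRA hRconn)
      (by
        rintro d hd x hx hadj
        have hxD : x.1 ∈ D := hDcl d.1 (hRsub hd).1 x.1 hx (by exact hadj)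
        exact hRcl d.1 hd x.1 ⟨hxD, x.2⟩ (by exact hadj))
      (by
        rw [Set.disjoint_left]
        rintro x hxC hxR
        exact Set.disjoint_left.mp hdisj hxC (hRsub hxR).1)
    intro c hc
    obtain ⟨d, hdR, hadj⟩ := key ⟨c, hCA hc⟩ hc
    exact ⟨d.1, (hRsub hdR).1, by exact hadj⟩
  · -- D lives entirely in B \ A; use IH for B with the gluing clique
    have hDB : ∀ x ∈ D, x ∈ B ∧ x ∉ A := by
      intro x hx
      have hxu : x ∈ A ∪ B := hunion ▸ Set.mem_univ x
      have hxA : x ∉ A := fun h => hDA ⟨x, hx, h⟩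
      exact ⟨hxu.resolve_left hxA, hxA⟩
    have hDsubB : D ⊆ B := fun x hx => (hDB x hx).1
    obtain ⟨d₀, hd₀⟩ := hDne
    have key := ihB {x : ↥B | x.1 ∈ A ∩ B} {x : ↥B | x.1 ∈ D}
      (fun a ha b hb hne => by exact hclq ha hb (fun h => hne (Subtype.ext h)))
      (by rw [ncard_val_preimage Set.inter_subset_right, hk])
      ⟨⟨d₀, hDsubB hd₀⟩, hd₀⟩
      (connected_induce_induce hDsubB hDconn)
      (by
        rintro d hd x hx hadj
        refine hDcl d.1 hd x.1 (fun hxC => hx ⟨hCA hxC, x.2⟩) (by exact hadj))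
      (by
        rw [Set.disjoint_left]
        rintro x ⟨hxA, _⟩ hxD
        exact (hDB x.1 hxD).2 hxA)
    have hCC' : ∀ c ∈ A ∩ B, ∃ d ∈ D, G.Adj d c := by
      intro c hc
      obtain ⟨d, hdD, hadj⟩ := key ⟨c, hc.2⟩ hc
      exact ⟨d.1, hdD, by exact hadj⟩
    have hC'C : A ∩ B ⊆ C := by
      intro c' hc'
      by_contra hc'C
      obtain ⟨d, hdD, hadj⟩ := hCC' c' hc'
      have : c' ∈ D := hDcl d hdD c' hc'C hadj
      exact (hDB c' this).2 hc'.1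
    have hCeq : A ∩ B = C := by
      refine Set.eq_of_subset_of_ncard_le hC'C ?_ (set_finite_of_ncard_five hC5)
      rw [hC5, hk]
    intro c hc
    exact hCC' c (hCeq ▸ hc)

lemma cockade85_clique_attach {V : Type} {H : SimpleGraph V} (hc : Cockade85 H) :
    ∀ C D : Set V, H.IsClique C → C.ncard = 5 → D.Nonempty →
      (H.induce D).Connected → (∀ d ∈ D, ∀ x, x ∉ C → H.Adj d x → x ∈ D) →
      Disjoint C D → ∀ c ∈ C, ∃ d ∈ D, H.Adj d c := by
  induction hc with
  | base₁ G h =>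
    intro C D hclq hC5 hDne hDconn hDcl hdisj c hc
    obtain ⟨e⟩ := h
    obtain ⟨d, hd⟩ := hDne
    refine ⟨d, hd, ?_⟩
    have hne : d ≠ c := fun h => Set.disjoint_right.mp hdisj hd (h ▸ hc)
    rw [← e.map_adj_iff]
    exact fun h => hne (e.toEquiv.injective h)
  | base₂ G h =>
    intro C D hclq hC5 hDne hDconn hDcl hdisj c hc
    obtain ⟨e⟩ := h
    have hadj : ∀ x y, G.Adj x y ↔ (e x).1 ≠ (e y).1 := by
      intro x y
      rw [← e.map_adj_iff]
      rfl
    obtain ⟨d₀, hd₀⟩ := hDne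
    by_cases hpd : (e d₀).1 = (e c).1
    · -- d₀ is the partner of c; find another vertex of D
      have hCfin : C.Finite := set_finite_of_ncard_five hC5
      have hpinj : Set.InjOn (fun x => (e x).1) C := by
        intro x hx y hy hxy
        by_contra hne
        exact (hadj x y).mp (hclq hx hy hne) hxy
      have himg : (fun x => (e x).1) '' C = Set.univ := by
        refine Set.eq_of_subset_of_ncard_le (Set.subset_univ _) ?_ (Set.finite_univ)
        rw [Set.ncard_univ, Set.ncard_image_of_injOn hpinj, hC5]
        simp [Nat.card_eq_fintype_card]
      obtain ⟨j, hj⟩ : ∃ j : Fin 5, j ≠ (e c).1 := by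
        exact exists_ne _
      obtain ⟨cj, hcjC, hcj⟩ : ∃ cj ∈ C, (e cj).1 = j := by
        have : j ∈ (fun x => (e x).1) '' C := himg ▸ Set.mem_univ j
        obtain ⟨cj, h1, h2⟩ := this
        exact ⟨cj, h1, h2⟩
      obtain ⟨j', k, hecj⟩ : ∃ j' k, e cj = ⟨j', k⟩ := ⟨(e cj).1, (e cj).2, rfl⟩
      have hcj' : j' = j := by rw [hecj] at hcj; exact hcj
      rw [hcj'] at hecj
      set y := e.symm ⟨j, k + 1⟩ with hy
      have hey : e y = ⟨j, k + 1⟩ := e.toEquiv.apply_symm_apply _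
      have hyj : (e y).1 = j := by rw [hey]
      have hsig : ∀ (jj : Fin 5) (kk : Fin 2),
          (⟨jj, kk⟩ : (Σ _ : Fin 5, Fin 2)) ≠ ⟨jj, kk + 1⟩ := by decide
      have hyne : y ≠ cj := by
        intro hyc
        rw [hyc, hecj] at hey
        exact hsig j k hey
      have hyC : y ∉ C := by
        intro hyCm
        exact hyne (hpinj hyCm hcjC (by show (e y).1 = (e cj).1; rw [hyj, hecj]))
      have hd₀y : G.Adj d₀ y := by
        rw [hadj, hpd, hyj]
        exact fun h => hj h.symm
      have hyD : y ∈ D := hDcl d₀ hd₀ y hyC hd₀y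
      refine ⟨y, hyD, ?_⟩
      rw [hadj, hyj]
      exact hj
    · exact ⟨d₀, hd₀, (hadj d₀ c).mpr hpd⟩
  | glue G A B hunion hAB hBA hk hclq hcross hcA hcB ihA ihB =>
    intro C D hclq' hC5 hDne hDconn hDcl hdisj
    have hCAB : C ⊆ A ∨ C ⊆ B := by
      by_contra hcon
      push_neg at hcon
      obtain ⟨h1, h2⟩ := hcon
      obtain ⟨x, hxC, hxA⟩ := Set.not_subset.mp h1
      obtain ⟨y, hyC, hyB⟩ := Set.not_subset.mp h2
      have hxB : x ∈ B := (hunion ▸ Set.mem_univ x : x ∈ A ∪ B).resolve_left hxA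
      have hyA : y ∈ A := (hunion ▸ Set.mem_univ y : y ∈ A ∪ B).resolve_right hyB
      have hne : y ≠ x := fun h => hxA (h ▸ hyA)
      exact hcross y ⟨hyA, hyB⟩ x ⟨hxB, hxA⟩ (hclq' hyC hxC hne)
    rcases hCAB with hCA | hCB
    · exact attach_glue_core G A B hunion hcross hk hclq ihA ihB C D hclq' hC5 hCA
        hDne hDconn hDcl hdisj
    · refine attach_glue_core G B A ?_ ?_ ?_ ?_ ihB ihA C D hclq' hC5 hCB
        hDne hDconn hDcl hdisj
      · rw [Set.union_comm]; exact hunion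
      · exact fun u hu v hv hadj => hcross v hv u hu hadj.symm
      · rw [Set.inter_comm]; exact hk
      · rw [Set.inter_comm]; exact hclq

end Attach
section AddVertexBases

open Function Set

instance addVertex.decidableAdj {V : Type} {G : SimpleGraph V} [DecidableRel G.Adj]
    {N : Set V} [DecidablePred (· ∈ N)] : DecidableRel (addVertex G N).Adj := fun a b =>
  match a, b with
  | some u, some w => (inferInstance : Decidable (G.Adj u w))
  | some u, none => (inferInstance : Decidable (u ∈ N))
  | none, some w => (inferInstance : Decidable (w ∈ N))
  | none, none => isFalse fun h => h

lemma addVertex_minor_transfer {V W : Type} {G : SimpleGraph V} {Gc : SimpleGraph W}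
    (φ : W → V) (hinj : Function.Injective φ)
    (hadj : ∀ a b, Gc.Adj a b → G.Adj (φ a) (φ b))
    {Nc : Set W} {N : Set V} (hN : ∀ x ∈ Nc, φ x ∈ N)
    (h : HasKEqMinor 9 (addVertex Gc Nc)) : HasKEqMinor 9 (addVertex G N) := by
  refine h.map_through (Option.map φ) (Option.map_injective hinj) ?_
  rintro (_ | x) (_ | y) had
  · exact had.elim
  · exact hN y had
  · exact hN x had
  · exact hadj x y had

lemma concrete_K8 :
    HasKEqMinor 9 (addVertex (⊤ : SimpleGraph (Fin 8)) {x : Fin 8 | (x : ℕ) < 6}) := by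
  refine ⟨s(6, 8), s(7, 8), by decide, by decide, by decide, ?_⟩
  refine isMinorOf_of_injective
    (fun i => if h : (i : ℕ) < 8 then some (⟨(i : ℕ), h⟩ : Fin 8) else none) (by decide) ?_
  intro a b hadj
  rw [SimpleGraph.deleteEdges_adj] at hadj
  obtain ⟨htop, hmem⟩ := hadj
  simp only [Set.mem_insert_iff, Set.mem_singleton_iff, not_or] at hmem
  obtain ⟨h1, h2⟩ := hmem
  revert htop h1 h2
  revert a b
  decide

lemma connected_induce_star {V : Type} {G : SimpleGraph V} {S : Set V} {x : V}
    (hx : x ∈ S) (h : ∀ y ∈ S, y = x ∨ G.Adj x y) : (G.induce S).Connected := by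
  rw [SimpleGraph.connected_iff_exists_forall_reachable]
  refine ⟨⟨x, hx⟩, ?_⟩
  rintro ⟨y, hy⟩
  rcases h y hy with rfl | hadj
  · exact SimpleGraph.Reachable.refl _
  · exact SimpleGraph.Adj.reachable (by exact hadj)

private def AV0 : SimpleGraph (Option (Σ _ : Fin 5, Fin 2)) :=
  addVertex K22222 {p : (Σ _ : Fin 5, Fin 2) | p.1 = 0}

private def F0 : Fin 9 → Finset (Option (Σ _ : Fin 5, Fin 2)) :=
  ![{none, some ⟨0, 0⟩}, {some ⟨0, 1⟩}, {some ⟨1, 0⟩, some ⟨2, 1⟩}, {some ⟨1, 1⟩},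
    {some ⟨2, 0⟩}, {some ⟨3, 0⟩}, {some ⟨3, 1⟩}, {some ⟨4, 0⟩}, {some ⟨4, 1⟩}]

private instance : DecidableRel AV0.Adj := by
  unfold AV0
  infer_instance

lemma concrete_K22222 :
    HasKEqMinor 9 (addVertex K22222 {p : (Σ _ : Fin 5, Fin 2) | p.1 = 0}) := by
  show HasKEqMinor 9 AV0
  refine ⟨s(5, 6), s(7, 8), by decide, by decide, by decide,
    fun i => ↑(F0 i), ?_, ?_, ?_, ?_⟩
  · have h : ∀ i, (F0 i).Nonempty := by decide
    exact fun i => Finset.coe_nonempty.mpr (h i)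
  · have h : ∀ i, ∃ x ∈ F0 i, ∀ y ∈ F0 i, y = x ∨ AV0.Adj x y := by decide
    intro i
    obtain ⟨x, hx, hstar⟩ := h i
    exact connected_induce_star (Finset.mem_coe.mpr hx)
      (fun y hy => hstar y (Finset.mem_coe.mp hy))
  · have h : ∀ i j : Fin 9, i ≠ j → Disjoint (F0 i) (F0 j) := by decide
    exact fun i j hne => Finset.disjoint_coe.mpr (h i j hne)
  · intro w₁ w₂ hadj
    rw [SimpleGraph.deleteEdges_adj] at hadj
    obtain ⟨htop, hmem⟩ := hadj
    simp only [Set.mem_insert_iff, Set.mem_singleton_iff, not_or] at hmem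
    obtain ⟨h1, h2⟩ := hmem
    have key : ∀ w₁ w₂ : Fin 9, w₁ ≠ w₂ → s(w₁, w₂) ≠ s(5, 6) → s(w₁, w₂) ≠ s(7, 8) →
        ∃ u ∈ F0 w₁, ∃ v ∈ F0 w₂, AV0.Adj u v := by decide
    obtain ⟨u, hu, v, hv, huv⟩ := key w₁ w₂ htop.ne h1 h2
    exact ⟨u, Finset.mem_coe.mpr hu, v, Finset.mem_coe.mpr hv, huv⟩

end AddVertexBases
section LemmaA

open Function Set

variable {V : Type}

lemma exists_equiv_fin_of_ncard {s : Set V} {n : ℕ} (h : s.ncard = n) (hfin : s.Finite) :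
    Nonempty (Fin n ≃ ↥s) := by
  haveI := hfin.fintype
  have hcard : Fintype.card ↥s = n := by
    rw [← Nat.card_eq_fintype_card, Nat.card_coe_set_eq, h]
  exact ⟨(Fintype.equivFinOfCardEq hcard).symm⟩

lemma glue_subcase (G : SimpleGraph V) (A : Set V) (N : Set V) (hNA : N ⊆ A)
    (hN6 : N.ncard = 6)
    (ihA : ∀ NA : Set ↥A, NA.ncard = 6 → HasKEqMinor 9 (addVertex (G.induce A) NA)) :
    HasKEqMinor 9 (addVertex G N) := by
  refine addVertex_minor_transfer (Subtype.val : ↥A → V) Subtype.val_injective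
    (fun a b hab => by exact hab) (fun x hx => hx)
    (ihA {x : ↥A | x.1 ∈ N} (by rw [ncard_val_preimage hNA, hN6]))

lemma cockade85_addVertex {H : SimpleGraph V} (hc : Cockade85 H) :
    ∀ N : Set V, N.ncard = 6 → HasKEqMinor 9 (addVertex H N) := by
  induction hc with
  | base₁ G h =>
    intro N hN6
    obtain ⟨e⟩ := h
    haveI : Fintype _ := Fintype.ofEquiv _ e.toEquiv.symm
    have hGadj : ∀ x y, x ≠ y → G.Adj x y := by
      intro x y hxy
      rw [← e.map_adj_iff]
      exact fun hc => hxy (e.toEquiv.injective hc)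
    obtain ⟨eN⟩ := exists_equiv_fin_of_ncard hN6 (Set.toFinite N)
    have hcompl : (Nᶜ).ncard = 2 := by
      have h1 := Set.ncard_add_ncard_compl N (Set.toFinite N)
      have h2 := Nat.card_congr e.toEquiv
      simp only [Nat.card_eq_fintype_card, Fintype.card_fin] at h1 h2
      omega
    obtain ⟨eM⟩ := exists_equiv_fin_of_ncard hcompl (Set.toFinite _)
    set g : Fin 8 → _ := fun i =>
      if h : (i : ℕ) < 6 then (eN ⟨(i : ℕ), h⟩).1
      else (eM ⟨(i : ℕ) - 6, by omega⟩).1 with hg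
    have hgN : ∀ (i : Fin 8) (h : (i : ℕ) < 6), g i ∈ N := by
      intro i h
      rw [hg]
      simp only [dif_pos h]
      exact (eN ⟨(i : ℕ), h⟩).2
    have hgM : ∀ (i : Fin 8) (h : ¬ (i : ℕ) < 6), g i ∈ Nᶜ := by
      intro i h
      rw [hg]
      simp only [dif_neg h]
      exact (eM _).2
    have hginj : Function.Injective g := by
      intro i j hij
      by_cases hi : (i : ℕ) < 6 <;> by_cases hj : (j : ℕ) < 6
      · rw [hg] at hij
        simp only [dif_pos hi, dif_pos hj] at hij
        have h2 := eN.injective (Subtype.ext hij)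
        have h3 : (i : ℕ) = (j : ℕ) := by
          have := congrArg Fin.val h2
          simpa using this
        exact Fin.ext h3
      · exact absurd (hij ▸ hgN i hi) (hgM j hj)
      · exact absurd ((hij.symm) ▸ hgN j hj) (hgM i hi)
      · rw [hg] at hij
        simp only [dif_neg hi, dif_neg hj] at hij
        have h2 := eM.injective (Subtype.ext hij)
        have h3 : (i : ℕ) - 6 = (j : ℕ) - 6 := by
          have := congrArg Fin.val h2
          simpa using this
        have hi8 := i.2
        have hj8 := j.2
        exact Fin.ext (by omega)
    refine addVertex_minor_transfer g hginj ?_ ?_ concrete_K8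
    · intro a b hab
      exact hGadj _ _ (fun hc => (SimpleGraph.top_adj a b).mp hab (hginj hc))
    · exact fun x hx => hgN x hx
  | base₂ G h =>
    intro N hN6
    obtain ⟨e⟩ := h
    haveI : Fintype _ := Fintype.ofEquiv _ e.toEquiv.symm
    have hNfin := Set.toFinite N
    haveI := hNfin.fintype
    have hcardN : Fintype.card ↥N = 6 := by
      rw [← Nat.card_eq_fintype_card, Nat.card_coe_set_eq, hN6]
    have hlt : Fintype.card (Fin 5) < Fintype.card ↥N := by
      rw [hcardN, Fintype.card_fin]
      omega
    obtain ⟨x, y, hxy, hfeq⟩ :=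
      Fintype.exists_ne_map_eq_of_card_lt (fun n : ↥N => (e n.1).1) hlt
    have hGadj : ∀ p q, G.Adj p q ↔ (e p).1 ≠ (e q).1 := by
      intro p q
      rw [← e.map_adj_iff]
      rfl
    have hab : x.1 ≠ y.1 := fun hc => hxy (Subtype.ext hc)
    set i₀ := (e x.1).1 with hi₀
    set c := (e x.1).2 with hc
    set φ : (Σ _ : Fin 5, Fin 2) → _ :=
      fun p => e.symm ⟨Equiv.swap 0 i₀ p.1, p.2 + c⟩ with hφ
    have heφ : ∀ p, e (φ p) = ⟨Equiv.swap 0 i₀ p.1, p.2 + c⟩ := by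
      intro p
      rw [hφ]
      exact e.apply_symm_apply _
    have hφinj : Function.Injective φ := by
      rintro ⟨p1, p2⟩ ⟨q1, q2⟩ hpq
      have h1 := congrArg e hpq
      rw [heφ, heφ] at h1
      obtain ⟨h2, h3⟩ := Sigma.mk.inj_iff.mp h1
      obtain rfl : p1 = q1 := (Equiv.swap 0 i₀).injective h2
      have h5 : p2 + c = q2 + c := eq_of_heq h3
      have h6 : p2 = q2 := by
        have hcan : ∀ k l m : Fin 2, k + m = l + m → k = l := by decide
        exact hcan _ _ _ h5
      rw [h6]
    have hf2 : ∀ k m : Fin 2, k ≠ m → k = m + 1 := by decide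
    refine addVertex_minor_transfer φ hφinj ?_ ?_ concrete_K22222
    · intro p q hpq
      rw [hGadj, heφ, heφ]
      intro hcon
      exact hpq ((Equiv.swap 0 i₀).injective hcon)
    · rintro ⟨p1, p2⟩ hp
      have hp0 : p1 = 0 := hp
      subst hp0
      have hsw : Equiv.swap (0 : Fin 5) i₀ 0 = i₀ := Equiv.swap_apply_left 0 i₀
      by_cases hp2 : p2 = 0
      · subst hp2
        have h7 : (⟨Equiv.swap 0 i₀ (0 : Fin 5), (0 : Fin 2) + c⟩ : Σ _ : Fin 5, Fin 2)
            = e x.1 := by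
          refine Sigma.ext ?_ ?_
          · rw [hsw]
          · exact heq_of_eq ((zero_add c).trans hc)
        have h8 : φ ⟨0, 0⟩ = x.1 := by
          rw [hφ]
          show e.symm ⟨Equiv.swap 0 i₀ (0 : Fin 5), (0 : Fin 2) + c⟩ = x.1
          rw [h7]
          exact e.symm_apply_apply _
        rw [h8]
        exact x.2
      · have hf01 : ∀ k : Fin 2, k ≠ 0 → k = 1 := by decide
        have hp21 : p2 = 1 := hf01 p2 hp2
        subst hp21
        have h2 : (e y.1).2 ≠ c := by
          intro hcon
          apply hab
          apply e.injective
          refine Sigma.ext ?_ ?_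
          · exact hfeq ▸ hi₀.symm
          · exact heq_of_eq (hc ▸ hcon.symm)
        have h3 : (e y.1).2 = c + 1 := hf2 _ _ h2
        have hey : e y.1 = ⟨i₀, c + 1⟩ := by
          refine Sigma.ext ?_ ?_
          · exact (hfeq).symm
          · exact heq_of_eq h3
        have h7 : (⟨Equiv.swap 0 i₀ (0 : Fin 5), (1 : Fin 2) + c⟩ : Σ _ : Fin 5, Fin 2)
            = e y.1 := by
          rw [hey]
          refine Sigma.ext ?_ ?_
          · rw [hsw]
          · exact heq_of_eq (add_comm 1 c)
        have h8 : φ ⟨0, 1⟩ = y.1 := by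
          rw [hφ]
          show e.symm ⟨Equiv.swap 0 i₀ (0 : Fin 5), (1 : Fin 2) + c⟩ = y.1
          rw [h7]
          exact e.symm_apply_apply _
        rw [h8]
        exact y.2
  | glue G A B hunion hAB hBA hk hclq hcross hcA hcB ihA ihB =>
    intro N hN6
    by_cases hNA : N ⊆ A
    · exact glue_subcase G A N hNA hN6 ihA
    by_cases hNB : N ⊆ B
    · exact glue_subcase G B N hNB hN6 ihB
    obtain ⟨w, hwN, hwB⟩ := Set.not_subset.mp hNB
    obtain ⟨u, huN, huA⟩ := Set.not_subset.mp hNA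
    have hwA : w ∈ A := (hunion ▸ Set.mem_univ w : w ∈ A ∪ B).resolve_right hwB
    have huB : u ∈ B := (hunion ▸ Set.mem_univ u : u ∈ A ∪ B).resolve_left huA
    obtain ⟨R, huR, hRsub, hRconn, hRcl⟩ :=
      exists_reach_set G (S := B \ A) (u := u) ⟨huB, huA⟩
    have hattach : ∀ c ∈ A ∩ B, ∃ d ∈ R, G.Adj d c := by
      refine cockade85_clique_attach
        (IsCockade.glue G A B hunion hAB hBA hk hclq hcross hcA hcB)
        (A ∩ B) R hclq hk ⟨u, huR⟩ hRconn ?_ ?_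
      · intro d hd z hzC hadj
        have hdBA := hRsub hd
        have hzAB : z ∉ A \ B := fun hz => hcross z hz d hdBA hadj.symm
        have hzB : z ∈ B := by
          rcases (hunion ▸ Set.mem_univ z : z ∈ A ∪ B) with hA' | hB'
          · by_cases hzB : z ∈ B
            · exact hzB
            · exact absurd ⟨hA', hzB⟩ hzAB
          · exact hB'
        have hzA : z ∉ A := fun hA' => hzC ⟨hA', hzB⟩
        exact hRcl d hd z ⟨hzB, hzA⟩ hadj
      · exact Set.disjoint_left.mpr fun z hzC hzR => (hRsub hzR).2 hzC.1
    have hwC : w ∉ A ∩ B := fun h => hwB h.2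
    have hN'6 : ({z : ↥A | z.1 ∈ insert w (A ∩ B)} : Set ↥A).ncard = 6 := by
      rw [ncard_val_preimage (by
        intro z hz
        rcases hz with rfl | hz
        · exact hwA
        · exact hz.1)]
      rw [Set.ncard_insert_of_notMem hwC (set_finite_of_ncard_five hk), hk]
    refine (ihA _ hN'6).of_isMinorOf ?_
    refine ⟨fun o => Option.rec (insert none (some '' R)) (fun z => {some z.1}) o,
      ?_, ?_, ?_, ?_⟩
    · rintro (_ | z)
      · exact ⟨none, Set.mem_insert _ _⟩
      · exact ⟨some z.1, rfl⟩
    · rintro (_ | z)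
      · refine connected_induce_insert none ?_ (some u) ⟨u, huR, rfl⟩ (by exact huN)
        exact connected_image some (fun a b hab => by exact hab) hRconn
      · exact connected_induce_singleton _ _
    · rintro (_ | z) (_ | z') hne
      · exact absurd rfl hne
      · rw [Set.disjoint_left]
        rintro o (rfl | ⟨r, hr, rfl⟩) ho
        · exact (Option.some_ne_none _ (Set.mem_singleton_iff.mp ho).symm).elim
        · have : r = z'.1 := Option.some_injective _ (Set.mem_singleton_iff.mp ho)
          exact (hRsub hr).2 (this ▸ z'.2)
      · rw [Set.disjoint_left]
        rintro o ho (rfl | ⟨r, hr, rfl⟩)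
        · exact (Option.some_ne_none _ (Set.mem_singleton_iff.mp ho).symm).elim
        · have : z.1 = r := Option.some_injective _ (Set.mem_singleton_iff.mp ho).symm
          exact (hRsub hr).2 (this ▸ z.2)
      · rw [Set.disjoint_left]
        rintro o ho ho'
        rw [Set.mem_singleton_iff.mp ho] at ho'
        have : z = z' := Subtype.ext (Option.some_injective _ (Set.mem_singleton_iff.mp ho'))
        exact hne (by rw [this])
    · rintro (_ | z) (_ | z') hadj
      · exact hadj.elim
      · rcases (hadj : z'.1 ∈ insert w (A ∩ B)) with hz | hz
        · exact ⟨none, Set.mem_insert _ _, some z'.1, rfl, by exact hz ▸ hwN⟩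
        · obtain ⟨d, hdR, hd⟩ := hattach z'.1 hz
          exact ⟨some d, Set.mem_insert_of_mem _ ⟨d, hdR, rfl⟩, some z'.1, rfl, by exact hd⟩
      · rcases (hadj : z.1 ∈ insert w (A ∩ B)) with hz | hz
        · exact ⟨some z.1, rfl, none, Set.mem_insert _ _, by exact hz ▸ hwN⟩
        · obtain ⟨d, hdR, hd⟩ := hattach z.1 hz
          exact ⟨some z.1, rfl, some d, Set.mem_insert_of_mem _ ⟨d, hdR, rfl⟩, by exact hd.symm⟩
      · exact ⟨some z.1, rfl, some z'.1, rfl, by exact hadj⟩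

end LemmaA
section MainProof

open Function Set

def isoTopOfEquiv {V W : Type} (e : V ≃ W) : (⊤ : SimpleGraph V) ≃g (⊤ : SimpleGraph W) :=
  ⟨e, by simp⟩

end MainProof

theorem min_counterexample_min_degree {V : Type} [Fintype V] (G : SimpleGraph V)
    (h8 : 8 ≤ Fintype.card V)
    (hE : G.edgeSet.ncard = 6 * Fintype.card V - 20)
    (hNoMinor : ¬ HasKEqMinor 9 G)
    (hNotCockade : ¬ Cockade85 G)
    (hMin : ∀ (W : Type) (instW : Fintype W) (H : SimpleGraph W),
      Fintype.card W < Fintype.card V → 8 ≤ Fintype.card W →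
      6 * Fintype.card W - 20 ≤ H.edgeSet.ncard →
      HasKEqMinor 9 H ∨ Cockade85 H) :
    ∀ v : V, 7 ≤ (G.neighborSet v).ncard := by
  classical
  intro v
  by_contra hdeg
  push_neg at hdeg
  have hn9 : 9 ≤ Fintype.card V := by
    by_contra hlt
    have hn8 : Fintype.card V = 8 := by omega
    have hGtop : G = ⊤ := by
      have hsub : G.edgeSet ⊆ (⊤ : SimpleGraph V).edgeSet :=
        SimpleGraph.edgeSet_mono le_top
      have htopcard : (⊤ : SimpleGraph V).edgeSet.ncard = 28 := by
        rw [← SimpleGraph.coe_edgeFinset, Set.ncard_coe_finset,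
          SimpleGraph.card_edgeFinset_top_eq_card_choose_two, hn8]
        decide
      have hedges : G.edgeSet = (⊤ : SimpleGraph V).edgeSet := by
        refine Set.eq_of_subset_of_ncard_le hsub ?_ (Set.toFinite _)
        rw [htopcard, hE, hn8]
      exact SimpleGraph.edgeSet_inj.mp hedges
    apply hNotCockade
    refine IsCockade.base₁ G ⟨?_⟩
    rw [hGtop]
    exact isoTopOfEquiv (Fintype.equivFinOfCardEq hn8)
  set S : Set V := {v}ᶜ with hS
  have hcardS : Nat.card ↥S = Fintype.card V - 1 := by
    have h1 := Set.ncard_add_ncard_compl ({v} : Set V) (Set.toFinite _)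
    rw [Set.ncard_singleton] at h1
    rw [← hS] at h1
    rw [Nat.card_coe_set_eq]
    simp only [Nat.card_eq_fintype_card] at h1
    omega
  have hcardS' : Fintype.card ↥S = Fintype.card V - 1 := by
    rw [← Nat.card_eq_fintype_card]
    exact hcardS
  have hdegedges := ncard_edgeSet_delete_vertex G v
  set d := (G.neighborSet v).ncard with hd
  have hd6 : d ≤ 6 := by omega
  have hEH : (G.induce S).edgeSet.ncard + d = 6 * Fintype.card V - 20 := by
    rw [← hE]
    exact hdegedges
  have happ := hMin ↥S inferInstance (G.induce S)
    (by omega) (by omega)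
    (by rw [hcardS']; omega)
  rcases happ with hmin | hck
  · exact hNoMinor (hmin.map_through Subtype.val Subtype.val_injective
      (fun a b hab => hab))
  · obtain ⟨hc8, hcE⟩ := cockade85_count hck inferInstance
    rw [hcardS] at hcE
    have hd6' : d = 6 := by omega
    set N' : Set ↥S := {x : ↥S | G.Adj v x.1} with hN'
    have hN'6 : N'.ncard = 6 := by
      have himg : Subtype.val '' N' = G.neighborSet v := by
        ext x
        constructor
        · rintro ⟨y, hy, rfl⟩
          exact hy
        · intro hx
          exact ⟨⟨x, Set.mem_compl_singleton_iff.mpr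
            (SimpleGraph.Adj.ne' (hx : G.Adj v x))⟩, hx, rfl⟩
      rw [← hd6', hd, ← himg, Set.ncard_image_of_injective N' Subtype.val_injective]
    have hminor := cockade85_addVertex hck N' hN'6
    apply hNoMinor
    refine hminor.map_through (fun o => Option.rec v (fun x => x.1) o) ?_ ?_
    · rintro (_ | x) (_ | y) hxy
      · rfl
      · exact absurd hxy.symm (Set.mem_compl_singleton_iff.mp y.2)
      · exact absurd hxy (Set.mem_compl_singleton_iff.mp x.2)
      · exact congrArg some (Subtype.ext hxy)
    · rintro (_ | x) (_ | y) hadj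
      · exact hadj.elim
      · exact hadj
      · have hvx : G.Adj v x.1 := hadj
        exact hvx.symm
      · exact hadj
end
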